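/- arXiv:math/0609119 — 3 statements merged into one kernel-verified Lean document; each statement's English description precedes it below -/
import Mathlib

section
/- Let n ≥ k ≥ 2, let 𝔽 be a field and let S_k ⊆ C([n],k). For every (k+1)-element face X of ⟨S_k⟩, the support of ∂_{k+1}X (regarded as a vector of 𝔽^{S_k}) is a circuit of Sim_k^n(S_k) with exactly k+1 elements; conversely, every circuit of Sim_k^n(S_k) with exactly k+1 elements equals supp(∂_{k+1}X) for some (k+1)-element face X of ⟨S_k⟩. -/
/-!
Common definitions for simplicial matroids, following Cordovil–Lemos–Linhares Sales,
"Dirac's theorem on simplicial matroids".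

We model `[n] = {1,…,n}` by `Fin n`, and a subset of `[n]` by a `Finset (Fin n)`.
A family `S_k ⊆ C([n],k)` is a `Finset (Finset (Fin n))` (all of whose members
have cardinality `k`, which is imposed by hypotheses in the theorems).
-/

open Finset

/-- The incidence number `[F' : F]`: if `F = i₁ < i₂ < ⋯ < iₘ` and `F' = F \ {iⱼ}`
then `[F' : F] = (-1)ʲ` (with `j` the 1-based position of the deleted element),
and `[F' : F] = 0` otherwise. -/
def inc {n : ℕ} (F' F : Finset (Fin n)) : ℤ :=
  ∑ i ∈ F, if F' = F.erase i then (-1 : ℤ) ^ (F.filter (fun j => j ≤ i)).card else 0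

/-- The family `C([n], m)` of `m`-element subsets of `[n]`, as a type. -/
abbrev Csets (n m : ℕ) := {F : Finset (Fin n) // F.card = m}

/-- `∂_k F`, the boundary of a single `k`-subset `F` of `[n]`,
as a vector of `𝔽^{C([n],k-1)}`. -/
def bvec (𝔽 : Type*) [Field 𝔽] (n k : ℕ) (F : Finset (Fin n)) : Csets n (k - 1) → 𝔽 :=
  fun F' => ((inc F'.1 F : ℤ) : 𝔽)

/-- Independence in the simplicial matroid `Sim_k^n(S_k)` over `𝔽`:
`X ⊆ S_k` is independent iff the vectors `∂_k F`, `F ∈ X`, are linearly independent. -/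
def SimIndep (𝔽 : Type*) [Field 𝔽] (n k : ℕ) (Sk X : Finset (Finset (Fin n))) : Prop :=
  X ⊆ Sk ∧ LinearIndependent 𝔽 (fun F : X => bvec 𝔽 n k F.1)

/-- A circuit of `Sim_k^n(S_k)`: a minimal dependent subset of the ground set. -/
def SimCircuit (𝔽 : Type*) [Field 𝔽] (n k : ℕ) (Sk C : Finset (Finset (Fin n))) : Prop :=
  C ⊆ Sk ∧ ¬ LinearIndependent 𝔽 (fun F : C => bvec 𝔽 n k F.1) ∧
    ∀ C' ⊂ C, LinearIndependent 𝔽 (fun F : C' => bvec 𝔽 n k F.1)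

/-- The rank (in `Sim_k^n`) of a set `X` of `k`-subsets of `[n]`:
the dimension of the span of the boundaries of its members. -/
noncomputable def simRank (𝔽 : Type*) [Field 𝔽] (n k : ℕ) (X : Finset (Finset (Fin n))) : ℕ :=
  Module.finrank 𝔽 (Submodule.span 𝔽 ((fun F => bvec 𝔽 n k F) '' (X : Set (Finset (Fin n)))))

/-- A cocircuit of `Sim_k^n(S_k)`, i.e. a circuit of the dual matroid:
a minimal set `C ⊆ S_k` whose complement does not span (`X` is independent in the dual
matroid iff `r(E ∖ X) = r(E)`). -/
def SimCocircuit (𝔽 : Type*) [Field 𝔽] (n k : ℕ) (Sk C : Finset (Finset (Fin n))) : Prop :=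
  C ⊆ Sk ∧ simRank 𝔽 n k (Sk \ C) < simRank 𝔽 n k Sk ∧
    ∀ C' ⊂ C, simRank 𝔽 n k (Sk \ C') = simRank 𝔽 n k Sk

/-- The boundary map `∂_k : 𝔽^{S_k} → 𝔽^{C([n],k-1)}`. -/
noncomputable def bdryMap (𝔽 : Type*) [Field 𝔽] (n k : ℕ) (Sk : Finset (Finset (Fin n))) :
    (↥Sk → 𝔽) →ₗ[𝔽] (Csets n (k - 1) → 𝔽) :=
  Matrix.mulVecLin (Matrix.of fun (F' : Csets n (k - 1)) (F : ↥Sk) => ((inc F'.1 F.1 : ℤ) : 𝔽))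

/-- The coboundary `δ^{k-1} V` of a `(k-1)`-subset `V` of `[n]`,
as a vector of `𝔽^{S_k}`; its `F`-coordinate is `[V : F]`. -/
def cobdry (𝔽 : Type*) [Field 𝔽] {n : ℕ} (Sk : Finset (Finset (Fin n)))
    (V : Finset (Fin n)) : ↥Sk → 𝔽 :=
  fun F => ((inc V F.1 : ℤ) : 𝔽)

/-- The boundary `∂_{k+1} X` of a `(k+1)`-subset `X` of `[n]`, regarded as a vector
of `𝔽^{S_k}`; its `F`-coordinate is `[F : X]`. -/
def pbdry (𝔽 : Type*) [Field 𝔽] {n : ℕ} (Sk : Finset (Finset (Fin n)))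
    (X : Finset (Fin n)) : ↥Sk → 𝔽 :=
  fun F => ((inc F.1 X : ℤ) : 𝔽)

open scoped Classical in
/-- The support of a vector of `𝔽^{S_k}`, as a set of `k`-subsets of `[n]`. -/
noncomputable def suppFin {𝔽 : Type*} [Field 𝔽] {n : ℕ} {Sk : Finset (Finset (Fin n))}
    (v : ↥Sk → 𝔽) : Finset (Finset (Fin n)) :=
  (Sk.attach.filter fun F => v F ≠ 0).image Subtype.val

/-- `supp(δ^{k-1} V) ⊆ S_k`. -/
noncomputable def suppδ (𝔽 : Type*) [Field 𝔽] {n : ℕ} (Sk : Finset (Finset (Fin n)))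
    (V : Finset (Fin n)) : Finset (Finset (Fin n)) :=
  suppFin (cobdry 𝔽 Sk V)

/-- The cocircuit space of `Sim_k^n(S_k)`: the orthogonal complement, with respect to the
standard bilinear form on `𝔽^{S_k}`, of the circuit space `ker ∂_k`. -/
noncomputable def cocircSpace (𝔽 : Type*) [Field 𝔽] (n k : ℕ) (Sk : Finset (Finset (Fin n))) :
    Submodule 𝔽 (↥Sk → 𝔽) where
  carrier := {w | ∀ v ∈ LinearMap.ker (bdryMap 𝔽 n k Sk), ∑ F, v F * w F = 0}
  zero_mem' := by intro v hv; simp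
  add_mem' := by
    intro a b ha hb v hv
    have h1 := ha v hv
    have h2 := hb v hv
    simp only [Pi.add_apply, mul_add, Finset.sum_add_distrib]
    rw [h1, h2, add_zero]
  smul_mem' := by
    intro c w hw v hv
    have h := hw v hv
    simp only [Pi.smul_apply, smul_eq_mul]
    calc ∑ F, v F * (c * w F) = ∑ F, c * (v F * w F) := by
          exact Finset.sum_congr rfl fun F _ => by ring
      _ = c * ∑ F, v F * w F := (Finset.mul_sum _ _ _).symm
      _ = 0 := by rw [h, mul_zero]

/-- The faces of the `k`-hyperclique complex `⟨S_k⟩`: all `F ⊆ [n]` with `|F| < k`,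
together with all `F` every `k`-element subset of which lies in `S_k`. -/
def IsFace {n : ℕ} (k : ℕ) (Sk : Finset (Finset (Fin n))) (F : Finset (Fin n)) : Prop :=
  F.card < k ∨ ∀ G ⊆ F, G.card = k → G ∈ Sk

/-- A facet of `⟨S_k⟩`: an inclusion-maximal face. -/
def IsFacet {n : ℕ} (k : ℕ) (Sk : Finset (Finset (Fin n))) (F : Finset (Fin n)) : Prop :=
  IsFace k Sk F ∧ ∀ G, IsFace k Sk G → F ⊆ G → F = G

/-- `V` is simplicial in `⟨S_k⟩` if there is exactly one facet `X` of `⟨S_k⟩`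
with `V ⊊ X`. -/
def SimplicialFace {n : ℕ} (k : ℕ) (Sk : Finset (Finset (Fin n))) (V : Finset (Fin n)) : Prop :=
  ∃! X, IsFacet k Sk X ∧ V ⊂ X

/-- The `k`-skeleta of the complexes `Δ_0 = ⟨S_k⟩`, `Δ_{j+1} = Δ_j ∖∖ V_j`, where
`Δ ∖∖ V = ⟨(skeleton of Δ) ∖ supp(δ^{k-1} V)⟩` (0-indexed). -/
noncomputable def delSeq (𝔽 : Type*) [Field 𝔽] {n : ℕ} (Sk : Finset (Finset (Fin n)))
    (V : ℕ → Finset (Fin n)) : ℕ → Finset (Finset (Fin n))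
  | 0 => Sk
  | j + 1 => delSeq 𝔽 Sk V j \ suppδ 𝔽 (delSeq 𝔽 Sk V j) (V j)

/-- `C*_j := supp(δ^{k-1} V_j) ∖ ⋃_{i<j} supp(δ^{k-1} V_i)` (0-indexed). -/
noncomputable def Cstar (𝔽 : Type*) [Field 𝔽] {n : ℕ} (Sk : Finset (Finset (Fin n)))
    (V : ℕ → Finset (Fin n)) (j : ℕ) : Finset (Finset (Fin n)) :=
  suppδ 𝔽 Sk (V j) \ (Finset.range j).biUnion (fun i => suppδ 𝔽 Sk (V i))

/-- `(V_1,…,V_r)` (0-indexed: `V 0, …, V (r-1)`) is a basic linear sequence for `⟨S_k⟩`,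
where `r` is the rank of `Sim_k^n(S_k)`: each `V_j` is a `(k-1)`-subset of `[n]` and each
`C*_j` is a cocircuit of `Sim_k^n(S_k(Δ_{j-1}))`. -/
def BasicLinearSeq (𝔽 : Type*) [Field 𝔽] (n k : ℕ) (Sk : Finset (Finset (Fin n))) (r : ℕ)
    (V : ℕ → Finset (Fin n)) : Prop :=
  simRank 𝔽 n k Sk = r ∧ (∀ j < r, (V j).card = k - 1) ∧
    ∀ j < r, SimCocircuit 𝔽 n k (delSeq 𝔽 Sk V j) (Cstar 𝔽 Sk V j)

/-- `⟨S_k⟩` is D-perfect: there is a basic linear sequence `V_1,…,V_r` such that each `V_j`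
is simplicial in `Δ_{j-1}`. -/
def DPerfect (𝔽 : Type*) [Field 𝔽] (n k : ℕ) (Sk : Finset (Finset (Fin n))) : Prop :=
  ∃ V : ℕ → Finset (Fin n),
    BasicLinearSeq 𝔽 n k Sk (simRank 𝔽 n k Sk) V ∧
      ∀ j < simRank 𝔽 n k Sk, SimplicialFace k (delSeq 𝔽 Sk V j) (V j)

/-- A flat of `Sim_k^n(S_k)`: a closed subset of the ground set. -/
def SimFlat (𝔽 : Type*) [Field 𝔽] (n k : ℕ) (Sk X : Finset (Finset (Fin n))) : Prop :=
  X ⊆ Sk ∧ ∀ F ∈ Sk,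
    bvec 𝔽 n k F ∈ Submodule.span 𝔽 ((fun G => bvec 𝔽 n k G) '' (X : Set (Finset (Fin n)))) →
      F ∈ X

/-- A hyperplane of `Sim_k^n(S_k)`: a flat of rank one less than the rank of the matroid. -/
def SimHyperplane (𝔽 : Type*) [Field 𝔽] (n k : ℕ) (Sk H : Finset (Finset (Fin n))) : Prop :=
  SimFlat 𝔽 n k Sk H ∧ simRank 𝔽 n k H + 1 = simRank 𝔽 n k Sk

/-- A modular flat of `Sim_k^n(S_k)`:
`r(X) + r(Y) = r(X ∪ Y) + r(X ∩ Y)` for every flat `Y`. -/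
def ModularFlat (𝔽 : Type*) [Field 𝔽] (n k : ℕ) (Sk X : Finset (Finset (Fin n))) : Prop :=
  SimFlat 𝔽 n k Sk X ∧ ∀ Y, SimFlat 𝔽 n k Sk Y →
    simRank 𝔽 n k X + simRank 𝔽 n k Y = simRank 𝔽 n k (X ∪ Y) + simRank 𝔽 n k (X ∩ Y)

open scoped Classical in
/-- The closure of `X` in `Sim_k^n(S_k)`. -/
noncomputable def simClosure (𝔽 : Type*) [Field 𝔽] (n k : ℕ)
    (Sk X : Finset (Finset (Fin n))) : Finset (Finset (Fin n)) :=
  Sk.filter fun F =>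
    bvec 𝔽 n k F ∈ Submodule.span 𝔽 ((fun G => bvec 𝔽 n k G) '' (X : Set (Finset (Fin n))))

/-- `Sim_k^n(S_k)` is supersolvable: it admits a maximal chain of modular flats
`cl(∅) = X_0 ⊊ X_1 ⊊ ⋯ ⊊ X_r = S_k`, `r` the rank. -/
def Supersolvable (𝔽 : Type*) [Field 𝔽] (n k : ℕ) (Sk : Finset (Finset (Fin n))) : Prop :=
  ∃ X : ℕ → Finset (Finset (Fin n)),
    X 0 = simClosure 𝔽 n k Sk ∅ ∧ X (simRank 𝔽 n k Sk) = Sk ∧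
      (∀ i < simRank 𝔽 n k Sk, X i ⊂ X (i + 1)) ∧
      ∀ i ≤ simRank 𝔽 n k Sk, ModularFlat 𝔽 n k Sk (X i)

/-- `H` is a dense hyperplane of `Sim_k^n(ground)`: a hyperplane of the form
`ground ∖ supp(δ^{k-1} V)` for some `(k-1)`-subset `V` simplicial in `⟨ground⟩`. -/
def DenseHyp (𝔽 : Type*) [Field 𝔽] (n k : ℕ) (ground H : Finset (Finset (Fin n))) : Prop :=
  SimHyperplane 𝔽 n k ground H ∧
    ∃ V : Finset (Fin n), V.card = k - 1 ∧ SimplicialFace k ground V ∧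
      H = ground \ suppδ 𝔽 ground V

/-- `Sim_k^n(S_k)` is superdense: there is a chain `∅ = X_0 ⊊ X_1 ⊊ ⋯ ⊊ X_r = S_k` of flats
(`r` the rank) with each `X_i` a dense hyperplane of `Sim_k^n(X_{i+1})`. -/
def Superdense (𝔽 : Type*) [Field 𝔽] (n k : ℕ) (Sk : Finset (Finset (Fin n))) : Prop :=
  ∃ X : ℕ → Finset (Finset (Fin n)),
    X 0 = ∅ ∧ X (simRank 𝔽 n k Sk) = Sk ∧
      (∀ i ≤ simRank 𝔽 n k Sk, SimFlat 𝔽 n k Sk (X i)) ∧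
      (∀ i < simRank 𝔽 n k Sk, X i ⊂ X (i + 1)) ∧
      ∀ i < simRank 𝔽 n k Sk, DenseHyp 𝔽 n k (X (i + 1)) (X i)

/-- `Sim_k^n(S_k)` is triangulable over `𝔽`: the boundaries of the `(k+1)`-faces of `⟨S_k⟩`
span the circuit space `ker ∂_k`. -/
def Triangulable (𝔽 : Type*) [Field 𝔽] (n k : ℕ) (Sk : Finset (Finset (Fin n))) : Prop :=
  Submodule.span 𝔽
      {v : ↥Sk → 𝔽 | ∃ X : Finset (Fin n), X.card = k + 1 ∧ IsFace k Sk X ∧ v = pbdry 𝔽 Sk X}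
    = LinearMap.ker (bdryMap 𝔽 n k Sk)

/-- `Sim_k^n(S_k)` is strongly triangulable over `𝔽`: there are `(k+1)`-faces `X_1,…,X_{m'}`
of `⟨S_k⟩` whose boundaries span `ker ∂_k` and such that every circuit `C` has a
representing vector `C⃗` with support `C` which is a combination, with nonzero coefficients,
of boundaries `∂_{k+1} X_{i_j}` with `⋃_{F ∈ C} F = ⋃_j X_{i_j}`. -/
def StronglyTriangulable (𝔽 : Type*) [Field 𝔽] (n k : ℕ)
    (Sk : Finset (Finset (Fin n))) : Prop :=
  ∃ (m' : ℕ) (Xs : Fin m' → Finset (Fin n)),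
    (∀ i, (Xs i).card = k + 1 ∧ IsFace k Sk (Xs i)) ∧
    Submodule.span 𝔽 (Set.range fun i => pbdry 𝔽 Sk (Xs i)) = LinearMap.ker (bdryMap 𝔽 n k Sk) ∧
    ∀ C, SimCircuit 𝔽 n k Sk C →
      ∃ (s : ℕ) (idx : Fin s → Fin m') (a : Fin s → 𝔽) (Cv : ↥Sk → 𝔽),
        (∀ j, a j ≠ 0) ∧ suppFin Cv = C ∧
        Cv = ∑ j, a j • pbdry 𝔽 Sk (Xs (idx j)) ∧
        C.biUnion id = Finset.univ.biUnion fun j : Fin s => Xs (idx j)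

/-- The simple graph `([n], S_2)`. -/
def graphOf {n : ℕ} (S2 : Finset (Finset (Fin n))) : SimpleGraph (Fin n) where
  Adj u v := u ≠ v ∧ ({u, v} : Finset (Fin n)) ∈ S2
  symm := by
    constructor
    intro u v h
    exact ⟨h.1.symm, by rw [Finset.pair_comm]; exact h.2⟩
  loopless := by constructor; intro u h; exact h.1 rfl

/-- A simple graph is chordal if every cycle of length at least four has a chord, i.e. an
edge of the graph joining two non-consecutive vertices of the cycle. -/
def Chordal {α : Type*} (G : SimpleGraph α) : Prop :=
  ∀ (v : α) (w : G.Walk v v), w.IsCycle → 4 ≤ w.length →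
    ∃ u₁ u₂, u₁ ∈ w.support ∧ u₂ ∈ w.support ∧ G.Adj u₁ u₂ ∧ s(u₁, u₂) ∉ w.edges



section Helpers
variable {n : ℕ}


lemma inc_erase {F : Finset (Fin n)} {i : Fin n} (hi : i ∈ F) :
    inc (F.erase i) F = (-1) ^ (F.filter (fun j => j ≤ i)).card := by
  unfold inc
  rw [Finset.sum_eq_single i]
  · simp
  · intro b hb hbi
    rw [if_neg]
    intro h
    exact hbi ((Finset.erase_inj F hb).mp h.symm)
  · intro h; exact absurd hi h

lemma inc_exists_of_ne_zero {F' F : Finset (Fin n)} (h : inc F' F ≠ 0) :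
    ∃ i ∈ F, F' = F.erase i := by
  by_contra hc
  push_neg at hc
  apply h
  unfold inc
  exact Finset.sum_eq_zero fun i hi => if_neg (hc i hi)

lemma inc_eq_or (F' F : Finset (Fin n)) : inc F' F = 0 ∨ inc F' F = 1 ∨ inc F' F = -1 := by
  by_cases h : inc F' F = 0
  · exact Or.inl h
  · obtain ⟨i, hi, rfl⟩ := inc_exists_of_ne_zero h
    rw [inc_erase hi]
    exact Or.inr (neg_one_pow_eq_or ℤ _)

lemma inc_cast_ne_zero_iff (𝔽 : Type*) [Field 𝔽] (F' F : Finset (Fin n)) :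
    ((inc F' F : ℤ) : 𝔽) ≠ 0 ↔ inc F' F ≠ 0 := by
  rcases inc_eq_or F' F with h | h | h <;> rw [h] <;> simp

lemma term_antisymm {X : Finset (Fin n)} {i j : Fin n} (hi : i ∈ X) (hj : j ∈ X) (hij : i ≠ j) :
    (-1 : ℤ) ^ ((X.erase i).filter (fun m => m ≤ j)).card * (-1) ^ (X.filter (fun m => m ≤ i)).card
    = -((-1) ^ ((X.erase j).filter (fun m => m ≤ i)).card * (-1) ^ (X.filter (fun m => m ≤ j)).card) := by
  have key : ∀ a b : Fin n, a ∈ X → b ∈ X → a < b →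
      (-1 : ℤ) ^ ((X.erase a).filter (fun m => m ≤ b)).card * (-1) ^ (X.filter (fun m => m ≤ a)).card
      = -((-1) ^ ((X.erase b).filter (fun m => m ≤ a)).card * (-1) ^ (X.filter (fun m => m ≤ b)).card) := by
    intro a b ha hb hab
    have h1 : ((X.erase a).filter (fun m => m ≤ b)).card + 1 = (X.filter (fun m => m ≤ b)).card := by
      rw [Finset.filter_erase]
      exact Finset.card_erase_add_one (Finset.mem_filter.mpr ⟨ha, le_of_lt hab⟩)
    have h2 : ((X.erase b).filter (fun m => m ≤ a)).card = (X.filter (fun m => m ≤ a)).card := by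
      rw [Finset.filter_erase, Finset.erase_eq_of_notMem]
      intro hmem
      exact absurd (Finset.mem_filter.mp hmem).2 (not_le.mpr hab)
    rw [h2, ← h1, pow_succ]
    ring
  rcases hij.lt_or_gt with h | h
  · exact key i j hi hj h
  · rw [key j i hj hi h]; ring

lemma bd_bd (X F' : Finset (Fin n)) :
    ∑ i ∈ X, inc F' (X.erase i) * inc (X.erase i) X = 0 := by
  classical
  set h : Fin n → Fin n → ℤ := fun i j =>
    if j = i then 0 else
      if F' = (X.erase i).erase j then
        (-1 : ℤ) ^ ((X.erase i).filter (fun m => m ≤ j)).card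
          * (-1) ^ (X.filter (fun m => m ≤ i)).card
      else 0 with hh
  have hstep : ∀ i ∈ X, inc F' (X.erase i) * inc (X.erase i) X = ∑ j ∈ X, h i j := by
    intro i hi
    rw [inc_erase hi]
    unfold inc
    rw [Finset.sum_mul]
    rw [← Finset.sum_erase (a := i) X (f := h i) (show h i i = 0 by simp [hh])]
    apply Finset.sum_congr rfl
    intro j hj
    have hji : j ≠ i := Finset.ne_of_mem_erase hj
    simp only [hh, if_neg hji]
    split <;> simp
  rw [Finset.sum_congr rfl hstep]
  have hanti : ∀ i ∈ X, ∀ j ∈ X, h i j = -h j i := by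
    intro i hi j hj
    rcases eq_or_ne j i with rfl | hji
    · simp [hh]
    · simp only [hh, if_neg hji, if_neg (Ne.symm hji)]
      have hcond : (F' = (X.erase i).erase j) ↔ (F' = (X.erase j).erase i) := by
        rw [Finset.erase_right_comm]
      by_cases hco : F' = (X.erase i).erase j
      · rw [if_pos hco, if_pos (hcond.mp hco)]
        exact term_antisymm hi hj (Ne.symm hji)
      · rw [if_neg hco, if_neg (fun hc => hco (hcond.mpr hc)), neg_zero]
  have : (∑ i ∈ X, ∑ j ∈ X, h i j) = -(∑ i ∈ X, ∑ j ∈ X, h i j) := by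
    conv_lhs => rw [Finset.sum_comm]
    rw [← Finset.sum_neg_distrib]
    apply Finset.sum_congr rfl
    intro j hj
    rw [← Finset.sum_neg_distrib]
    exact Finset.sum_congr rfl fun i hi => hanti i hi j hj
  linarith [this]


lemma ld_iff (𝔽 : Type*) [Field 𝔽] (n k : ℕ) (C : Finset (Finset (Fin n))) :
    LinearIndependent 𝔽 (fun F : C => bvec 𝔽 n k F.1) ↔
      ∀ g : Finset (Fin n) → 𝔽, ∑ F ∈ C, g F • bvec 𝔽 n k F = 0 → ∀ F ∈ C, g F = 0 := by
  classical
  rw [Fintype.linearIndependent_iff]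
  constructor
  · intro h g hg F hF
    refine h (fun i => g i.1) ?_ ⟨F, hF⟩
    rw [Finset.univ_eq_attach, ← Finset.sum_attach C (fun F => g F • bvec 𝔽 n k F)] at *
    exact hg
  · intro h g hg i
    set g' : Finset (Fin n) → 𝔽 := fun F => if hF : F ∈ C then g ⟨F, hF⟩ else 0 with hg'
    have h2 : g' i.1 = g i := by simp [hg']
    rw [← h2]
    refine h g' ?_ i.1 i.2
    rw [← Finset.sum_attach C (fun F => g' F • bvec 𝔽 n k F)]
    rw [Finset.univ_eq_attach] at hg
    rw [← hg]
    apply Finset.sum_congr rfl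
    intro x _
    simp [hg']


lemma sum_eval (𝔽 : Type*) [Field 𝔽] (n k : ℕ) (C : Finset (Finset (Fin n)))
    (g : Finset (Fin n) → 𝔽)
    (h : ∑ F ∈ C, g F • bvec 𝔽 n k F = 0) (F' : Csets n (k - 1)) :
    ∑ F ∈ C, g F * ((inc F'.1 F : ℤ) : 𝔽) = 0 := by
  have h2 := congrFun h F'
  simpa [bvec, Finset.sum_apply] using h2

lemma suppFin_pbdry (𝔽 : Type*) [Field 𝔽] {n : ℕ} (k : ℕ) (Sk : Finset (Finset (Fin n)))
    (X : Finset (Fin n)) (hX : X.card = k + 1) (hface : ∀ G ⊆ X, G.card = k → G ∈ Sk) :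
    suppFin (pbdry 𝔽 Sk X) = X.image (fun i => X.erase i) := by
  classical
  ext F
  simp only [suppFin, pbdry, Finset.mem_image, Finset.mem_filter, Finset.mem_attach, true_and]
  constructor
  · rintro ⟨⟨F, hF⟩, hne, rfl⟩
    have h1 : inc F X ≠ 0 := (inc_cast_ne_zero_iff 𝔽 F X).mp (Finset.mem_filter.mp hne).2
    obtain ⟨i, hi, rfl⟩ := inc_exists_of_ne_zero h1
    exact ⟨i, hi, rfl⟩
  · rintro ⟨i, hi, rfl⟩
    have hmem : X.erase i ∈ Sk := hface _ (Finset.erase_subset i X)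
      (by rw [Finset.card_erase_of_mem hi, hX]; omega)
    refine ⟨⟨X.erase i, hmem⟩, ?_, rfl⟩
    refine Finset.mem_filter.mpr ⟨Finset.mem_attach _ _, ?_⟩
    show ((inc (X.erase i) X : ℤ) : 𝔽) ≠ 0
    rw [inc_cast_ne_zero_iff, inc_erase hi]
    exact pow_ne_zero _ (by norm_num)

lemma indep_sub (𝔽 : Type*) [Field 𝔽] {n : ℕ} (k : ℕ) {X : Finset (Fin n)}
    (hX : X.card = k + 1) {C' : Finset (Finset (Fin n))}
    (hsub : C' ⊆ X.image (fun i => X.erase i))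
    {j : Fin n} (hj : j ∈ X) (hjC : X.erase j ∉ C') :
    LinearIndependent 𝔽 (fun F : C' => bvec 𝔽 n k F.1) := by
  rw [ld_iff]
  intro g hg F hF
  obtain ⟨i, hi, rfl⟩ := Finset.mem_image.mp (hsub hF)
  have hij : i ≠ j := by rintro rfl; exact hjC hF
  have hjX : j ∈ X.erase i := Finset.mem_erase.mpr ⟨hij.symm, hj⟩
  have hcard : ((X.erase i).erase j).card = k - 1 := by
    rw [Finset.card_erase_of_mem hjX, Finset.card_erase_of_mem hi, hX]; omega
  have h0 := sum_eval 𝔽 n k C' g hg ⟨(X.erase i).erase j, hcard⟩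
  rw [Finset.sum_eq_single_of_mem (X.erase i) hF ?side] at h0
  · have h1 : inc ((X.erase i).erase j) (X.erase i) ≠ 0 := by
      rw [inc_erase hjX]; exact pow_ne_zero _ (by norm_num)
    have h2 := (inc_cast_ne_zero_iff 𝔽 _ _).mpr h1
    exact (mul_eq_zero.mp h0).resolve_right h2
  case side =>
    intro G hG hGne
    obtain ⟨i', hi', rfl⟩ := Finset.mem_image.mp (hsub hG)
    have h3 : inc ((X.erase i).erase j) (X.erase i') = 0 := by
      by_contra hne
      obtain ⟨m, hm, heq⟩ := inc_exists_of_ne_zero hne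
      have hsub2 : (X.erase i).erase j ⊆ X.erase i' := by
        rw [heq]; exact Finset.erase_subset m _
      have hi'' : i' = i ∨ i' = j := by
        by_contra hcon; push_neg at hcon
        have hmm : i' ∈ (X.erase i).erase j :=
          Finset.mem_erase.mpr ⟨hcon.2, Finset.mem_erase.mpr ⟨hcon.1, hi'⟩⟩
        exact (Finset.notMem_erase i' X) (hsub2 hmm)
      rcases hi'' with rfl | rfl
      · exact hGne rfl
      · exact hjC hG
    rw [h3]
    simp



lemma part1 (𝔽 : Type*) [Field 𝔽] {n : ℕ} (k : ℕ) (Sk : Finset (Finset (Fin n)))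
    (X : Finset (Fin n)) (hX : X.card = k + 1) (hface : ∀ G ⊆ X, G.card = k → G ∈ Sk) :
    SimCircuit 𝔽 n k Sk (suppFin (pbdry 𝔽 Sk X)) ∧ (suppFin (pbdry 𝔽 Sk X)).card = k + 1 := by
  classical
  have hsupp := suppFin_pbdry 𝔽 k Sk X hX hface
  have hinj : Set.InjOn (fun i => X.erase i) X := fun a ha b hb h => (Finset.erase_inj X ha).mp h
  have hcard : (suppFin (pbdry 𝔽 Sk X)).card = k + 1 := by
    rw [hsupp, Finset.card_image_of_injOn hinj, hX]
  refine ⟨⟨?_, ?_, ?_⟩, hcard⟩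
  · rw [hsupp]
    intro F hF
    obtain ⟨i, hi, rfl⟩ := Finset.mem_image.mp hF
    exact hface _ (Finset.erase_subset i X) (by rw [Finset.card_erase_of_mem hi, hX]; omega)
  · rw [ld_iff]
    intro hall
    have hzero : ∑ F ∈ suppFin (pbdry 𝔽 Sk X), ((inc F X : ℤ) : 𝔽) • bvec 𝔽 n k F = 0 := by
      rw [hsupp, Finset.sum_image (fun a ha b hb h => hinj ha hb h)]
      funext F'
      simp only [Finset.sum_apply, Pi.smul_apply, smul_eq_mul, bvec, Pi.zero_apply]
      have hcast : ∑ i ∈ X, ((inc (X.erase i) X : ℤ) : 𝔽) * ((inc F'.1 (X.erase i) : ℤ) : 𝔽)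
          = ((∑ i ∈ X, inc F'.1 (X.erase i) * inc (X.erase i) X : ℤ) : 𝔽) := by
        push_cast
        exact Finset.sum_congr rfl fun i _ => mul_comm _ _
      rw [hcast, bd_bd, Int.cast_zero]
    have hne : X.Nonempty := Finset.card_pos.mp (by omega)
    obtain ⟨i, hi⟩ := hne
    have hmem : X.erase i ∈ suppFin (pbdry 𝔽 Sk X) := by
      rw [hsupp]; exact Finset.mem_image_of_mem _ hi
    have h0 := hall _ hzero (X.erase i) hmem
    have h1 : ((inc (X.erase i) X : ℤ) : 𝔽) ≠ 0 := by
      rw [inc_cast_ne_zero_iff, inc_erase hi]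
      exact pow_ne_zero _ (by norm_num)
    exact h1 h0
  · intro C'' hss
    obtain ⟨F, hFsupp, hFC⟩ := Finset.exists_of_ssubset hss
    have hsub : C'' ⊆ X.image (fun i => X.erase i) := by
      rw [← hsupp]; exact hss.subset
    rw [hsupp] at hFsupp
    obtain ⟨j, hj, rfl⟩ := Finset.mem_image.mp hFsupp
    exact indep_sub 𝔽 k hX hsub hj hFC




lemma circuit_structure {n k : ℕ} (hk : 2 ≤ k) {C : Finset (Finset (Fin n))}
    (hcards : ∀ F ∈ C, F.card = k) (hcard : C.card = k + 1)
    (hcanc : ∀ F ∈ C, ∀ i ∈ F, ∃ G ∈ C, G ≠ F ∧ F.erase i ⊆ G) :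
    ∃ X : Finset (Fin n), X.card = k + 1 ∧ C = X.image (fun i => X.erase i) := by
  classical
  obtain ⟨F0, hF0⟩ := Finset.card_pos.mp (show 0 < C.card by omega)
  have hF0card : F0.card = k := hcards F0 hF0
  have heqF : ∀ G ∈ C, F0 ⊆ G → G = F0 :=
    fun G hG hsub => (Finset.eq_of_subset_of_card_le hsub
      (by rw [hcards G hG, hF0card])).symm
  have hC3 : ∀ G ∈ C, G ≠ F0 → ∀ a b : Fin n, a ∈ F0 → b ∈ F0 →
      F0.erase a ⊆ G → F0.erase b ⊆ G → a = b := by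
    intro G hG hGF0 a b ha hb hsa hsb
    by_contra hab
    refine hGF0 (heqF G hG ?_)
    intro x hx
    by_cases hxa : x = a
    · subst hxa
      exact hsb (Finset.mem_erase.mpr ⟨hab, hx⟩)
    · exact hsa (Finset.mem_erase.mpr ⟨hxa, hx⟩)
  set ψ : Fin n → Finset (Fin n) := fun a =>
    if h : a ∈ F0 then (hcanc F0 hF0 a h).choose else ∅ with hψdef
  have hψ : ∀ a ∈ F0, ψ a ∈ C ∧ ψ a ≠ F0 ∧ F0.erase a ⊆ ψ a := by
    intro a ha
    have hspec := (hcanc F0 hF0 a ha).choose_spec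
    simp only [hψdef, dif_pos ha]
    exact ⟨hspec.1, hspec.2.1, hspec.2.2⟩
  have hψinj : Set.InjOn ψ F0 := by
    intro a ha b hb hab
    exact hC3 (ψ a) (hψ a ha).1 (hψ a ha).2.1 a b ha hb (hψ a ha).2.2
      (hab ▸ (hψ b hb).2.2)
  have himg : F0.image ψ = C.erase F0 := by
    apply Finset.eq_of_subset_of_card_le
    · intro G hG
      obtain ⟨a, ha, rfl⟩ := Finset.mem_image.mp hG
      exact Finset.mem_erase.mpr ⟨(hψ a ha).2.1, (hψ a ha).1⟩
    · rw [Finset.card_image_of_injOn hψinj, hF0card, Finset.card_erase_of_mem hF0, hcard]; omega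
  have hsurj : ∀ G ∈ C, G ≠ F0 → ∃ a ∈ F0, ψ a = G := by
    intro G hG hGF0
    have : G ∈ F0.image ψ := by rw [himg]; exact Finset.mem_erase.mpr ⟨hGF0, hG⟩
    exact Finset.mem_image.mp this
  have hC5 : ∀ G1 ∈ C, ∀ G2 ∈ C, G1 ≠ F0 → G2 ≠ F0 → ∀ a ∈ F0,
      F0.erase a ⊆ G1 → F0.erase a ⊆ G2 → G1 = G2 := by
    intro G1 hG1 G2 hG2 h1F h2F a ha hs1 hs2
    obtain ⟨b1, hb1, hpsi1⟩ := hsurj G1 hG1 h1F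
    obtain ⟨b2, hb2, hpsi2⟩ := hsurj G2 hG2 h2F
    have e1 : b1 = a := hC3 G1 hG1 h1F b1 a hb1 ha (hpsi1 ▸ (hψ b1 hb1).2.2) hs1
    have e2 : b2 = a := hC3 G2 hG2 h2F b2 a hb2 ha (hpsi2 ▸ (hψ b2 hb2).2.2) hs2
    rw [← hpsi1, ← hpsi2, e1, e2]
  have hdecomp : ∀ G ∈ C, G ≠ F0 → ∀ a ∈ F0, F0.erase a ⊆ G →
      ∃ y, y ∉ F0 ∧ G = insert y (F0.erase a) := by
    intro G hG hGF0 a ha hs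
    have hc1 : (G \ F0.erase a).card = 1 := by
      rw [Finset.card_sdiff_of_subset hs, hcards G hG, Finset.card_erase_of_mem ha, hF0card]
      omega
    obtain ⟨y, hy⟩ := Finset.card_eq_one.mp hc1
    have hGdef : G = insert y (F0.erase a) := by
      rw [← Finset.sdiff_union_of_subset hs, hy]
      exact (Finset.insert_eq y _).symm
    refine ⟨y, ?_, hGdef⟩
    intro hyF0
    have hynotin : y ∉ F0.erase a := by
      have : y ∈ G \ F0.erase a := by rw [hy]; exact Finset.mem_singleton_self y
      exact (Finset.mem_sdiff.mp this).2
    have hya : y = a := by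
      by_contra hya
      exact hynotin (Finset.mem_erase.mpr ⟨hya, hyF0⟩)
    subst hya
    rw [Finset.insert_erase hyF0] at hGdef
    exact hGF0 hGdef
  have hC6 : ∀ G1 ∈ C, ∀ G2 ∈ C, G1 ≠ F0 → G2 ≠ F0 →
      ∀ y1 y2 a1 a2 : Fin n, a1 ∈ F0 → a2 ∈ F0 → y1 ∉ F0 → y2 ∉ F0 →
      G1 = insert y1 (F0.erase a1) → G2 = insert y2 (F0.erase a2) → y1 = y2 := by
    intro G1 hG1 G2 hG2 h1F h2F y1 y2 a1 a2 ha1 ha2 hy1 hy2 hd1 hd2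
    by_cases hG : G1 = G2
    · have : y1 ∈ insert y2 (F0.erase a2) := by
        rw [← hd2, ← hG, hd1]; exact Finset.mem_insert_self y1 _
      rcases Finset.mem_insert.mp this with h | h
      · exact h
      · exact absurd (Finset.mem_of_mem_erase h) hy1
    · have hsub1 : F0.erase a1 ⊆ G1 := by rw [hd1]; exact Finset.subset_insert _ _
      have hsub2 : F0.erase a2 ⊆ G2 := by rw [hd2]; exact Finset.subset_insert _ _
      have ha12 : a1 ≠ a2 := by
        intro h
        exact hG (hC5 G1 hG1 G2 hG2 h1F h2F a1 ha1 hsub1 (h ▸ hsub2))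
      have ha2G1 : a2 ∈ G1 := hsub1 (Finset.mem_erase.mpr ⟨ha12.symm, ha2⟩)
      obtain ⟨H, hHC, hHG1, hHsub⟩ := hcanc G1 hG1 a2 ha2G1
      have hy1a2 : y1 ≠ a2 := fun h => hy1 (h ▸ ha2)
      have hy1G1 : y1 ∈ G1 := by rw [hd1]; exact Finset.mem_insert_self y1 _
      have hy1H : y1 ∈ H := hHsub (Finset.mem_erase.mpr ⟨hy1a2, hy1G1⟩)
      have hHF0 : H ≠ F0 := fun h => hy1 (h ▸ hy1H)
      obtain ⟨aH, haH, hpsiH⟩ := hsurj H hHC hHF0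
      have hsubH : F0.erase aH ⊆ H := hpsiH ▸ (hψ aH haH).2.2
      obtain ⟨yH, hyH, hHdef⟩ := hdecomp H hHC hHF0 aH haH hsubH
      have hyHy1 : yH = y1 := by
        have : y1 ∈ insert yH (F0.erase aH) := hHdef ▸ hy1H
        rcases Finset.mem_insert.mp this with h | h
        · exact h.symm
        · exact absurd (Finset.mem_of_mem_erase h) hy1
      have haH12 : aH = a1 ∨ aH = a2 := by
        by_contra hcon
        push_neg at hcon
        have haHy1 : aH ≠ y1 := fun h => hy1 (h ▸ haH)
        have h1 : aH ∈ G1 := by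
          rw [hd1]
          exact Finset.mem_insert_of_mem (Finset.mem_erase.mpr ⟨hcon.1, haH⟩)
        have h2 : aH ∈ H := hHsub (Finset.mem_erase.mpr ⟨hcon.2, h1⟩)
        rw [hHdef] at h2
        rcases Finset.mem_insert.mp h2 with h | h
        · exact hyH (h ▸ haH)
        · exact Finset.notMem_erase aH F0 h
      rcases haH12 with rfl | rfl
      · exact absurd (by rw [hHdef, hyHy1, ← hd1]) hHG1
      · have hHG2 : H = G2 := hC5 H hHC G2 hG2 hHF0 h2F aH haH hsubH hsub2
        have : y2 ∈ insert yH (F0.erase aH) := by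
          rw [← hHdef, hHG2, hd2]; exact Finset.mem_insert_self y2 _
        rcases Finset.mem_insert.mp this with h | h
        · rw [h, hyHy1]
        · exact absurd (Finset.mem_of_mem_erase h) hy2
  -- pick Gstar and y
  have hCe : (C.erase F0).Nonempty := by
    rw [← Finset.card_pos, Finset.card_erase_of_mem hF0, hcard]
    omega
  obtain ⟨Gstar, hGstar⟩ := hCe
  have hGsC : Gstar ∈ C := Finset.mem_of_mem_erase hGstar
  have hGsF0 : Gstar ≠ F0 := Finset.ne_of_mem_erase hGstar
  obtain ⟨astar, hastar, hpsis⟩ := hsurj Gstar hGsC hGsF0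
  have hsubs : F0.erase astar ⊆ Gstar := hpsis ▸ (hψ astar hastar).2.2
  obtain ⟨y, hyF0, hGsdef⟩ := hdecomp Gstar hGsC hGsF0 astar hastar hsubs
  set X : Finset (Fin n) := insert y F0 with hXdef
  have hXcard : X.card = k + 1 := by
    rw [hXdef, Finset.card_insert_of_notMem hyF0, hF0card]
  refine ⟨X, hXcard, ?_⟩
  have himg2 : X.image (fun i => X.erase i) ⊆ C := by
    intro F hF
    obtain ⟨i, hi, rfl⟩ := Finset.mem_image.mp hF
    rcases Finset.mem_insert.mp hi with rfl | hiF0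
    · rw [hXdef, Finset.erase_insert hyF0]
      exact hF0
    · have hiy : y ≠ i := fun h => hyF0 (h ▸ hiF0)
      have hGi := hψ i hiF0
      obtain ⟨yi, hyi, hGidef⟩ := hdecomp (ψ i) hGi.1 hGi.2.1 i hiF0 hGi.2.2
      have : yi = y := hC6 (ψ i) hGi.1 Gstar hGsC hGi.2.1 hGsF0 yi y i astar hiF0 hastar
        hyi hyF0 hGidef hGsdef
      rw [hXdef, Finset.erase_insert_of_ne hiy]
      rw [← this, ← hGidef]
      exact hGi.1
  have hicard : (X.image (fun i => X.erase i)).card = k + 1 := by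
    rw [Finset.card_image_of_injOn (fun a ha b hb h => (Finset.erase_inj X ha).mp h), hXcard]
  exact (Finset.eq_of_subset_of_card_le himg2 (by rw [hicard, hcard])).symm

lemma part2 (𝔽 : Type*) [Field 𝔽] {n : ℕ} (k : ℕ) (hk : 2 ≤ k)
    (Sk : Finset (Finset (Fin n))) (hSk : ∀ F ∈ Sk, F.card = k)
    (C : Finset (Finset (Fin n))) (hC : SimCircuit 𝔽 n k Sk C) (hcard : C.card = k + 1) :
    ∃ X : Finset (Fin n), X.card = k + 1 ∧ IsFace k Sk X ∧ C = suppFin (pbdry 𝔽 Sk X) := by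
  classical
  obtain ⟨hCsub, hdep, hmin⟩ := hC
  have hcards : ∀ F ∈ C, F.card = k := fun F hF => hSk F (hCsub hF)
  rw [ld_iff] at hdep
  push_neg at hdep
  obtain ⟨g, hgsum, F1, hF1, hgF1⟩ := hdep
  have hgall : ∀ F ∈ C, g F ≠ 0 := by
    intro F0 hF0 hg0
    have hss : C.erase F0 ⊂ C := Finset.erase_ssubset hF0
    have hli := hmin _ hss
    rw [ld_iff] at hli
    have hsum' : ∑ F ∈ C.erase F0, g F • bvec 𝔽 n k F = 0 := by
      rw [Finset.sum_erase (a := F0) C (f := fun F => g F • bvec 𝔽 n k F)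
        (show g F0 • bvec 𝔽 n k F0 = 0 by rw [hg0, zero_smul])]
      exact hgsum
    have hz : g F1 = 0 := by
      by_cases h : F1 = F0
      · rw [h]; exact hg0
      · exact hli g hsum' F1 (Finset.mem_erase.mpr ⟨h, hF1⟩)
    exact hgF1 hz
  have hcanc : ∀ F ∈ C, ∀ i ∈ F, ∃ G ∈ C, G ≠ F ∧ F.erase i ⊆ G := by
    intro F hF i hi
    have hc : (F.erase i).card = k - 1 := by
      rw [Finset.card_erase_of_mem hi, hcards F hF]
    have h0 := sum_eval 𝔽 n k C g hgsum ⟨F.erase i, hc⟩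
    by_contra hcon
    push_neg at hcon
    rw [Finset.sum_eq_single_of_mem F hF ?side] at h0
    · have h1 : ((inc (F.erase i) F : ℤ) : 𝔽) ≠ 0 := by
        rw [inc_cast_ne_zero_iff, inc_erase hi]; exact pow_ne_zero _ (by norm_num)
      rcases mul_eq_zero.mp h0 with h | h
      · exact hgall F hF h
      · exact h1 h
    case side =>
      intro G hG hGF
      have hz : inc (F.erase i) G = 0 := by
        by_contra hne
        obtain ⟨m, hm, heq⟩ := inc_exists_of_ne_zero hne
        exact hcon G hG hGF (heq ▸ Finset.erase_subset m G)
      rw [hz]; simp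
  obtain ⟨X, hXcard, hXeq⟩ := circuit_structure hk hcards hcard hcanc
  have hface : ∀ G ⊆ X, G.card = k → G ∈ Sk := by
    intro G hGX hGcard
    have hc1 : (X \ G).card = 1 := by
      rw [Finset.card_sdiff_of_subset hGX, hXcard, hGcard]; omega
    obtain ⟨i, hi⟩ := Finset.card_eq_one.mp hc1
    have hiX : i ∈ X := by
      have hmem : i ∈ X \ G := hi ▸ Finset.mem_singleton_self i
      exact (Finset.mem_sdiff.mp hmem).1
    have hGe : G = X.erase i := by
      rw [Finset.erase_eq, ← hi, sdiff_sdiff_right_self]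
      exact (Finset.inter_eq_right.mpr hGX).symm
    rw [hGe]
    apply hCsub
    rw [hXeq]
    exact Finset.mem_image_of_mem _ hiX
  refine ⟨X, hXcard, Or.inr hface, ?_⟩
  rw [suppFin_pbdry 𝔽 k Sk X hXcard hface, ← hXeq]


end Helpers

theorem stmt1 (𝔽 : Type*) [Field 𝔽] (n k : ℕ) (hk : 2 ≤ k) (hkn : k ≤ n)
    (Sk : Finset (Finset (Fin n))) (hSk : ∀ F ∈ Sk, F.card = k) :
    (∀ X : Finset (Fin n), X.card = k + 1 → IsFace k Sk X →
      SimCircuit 𝔽 n k Sk (suppFin (pbdry 𝔽 Sk X)) ∧ (suppFin (pbdry 𝔽 Sk X)).card = k + 1) ∧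
    (∀ C : Finset (Finset (Fin n)), SimCircuit 𝔽 n k Sk C → C.card = k + 1 →
      ∃ X : Finset (Fin n), X.card = k + 1 ∧ IsFace k Sk X ∧ C = suppFin (pbdry 𝔽 Sk X)) := by
  constructor
  · intro X hX hface
    have hf : ∀ G ⊆ X, G.card = k → G ∈ Sk := by
      rcases hface with h | h
      · rw [hX] at h; omega
      · exact h
    exact part1 𝔽 k Sk X hX hf
  · intro C hC hcard
    exact part2 𝔽 k hk Sk hSk C hC hcard
end

section
/- Let n ≥ k ≥ 2, let 𝔽 be a field and let S_k ⊆ C([n],k), and suppose Sim_k^n(S_k) has rank r. If (V_1,…,V_r) is a basic linear sequence for ⟨S_k⟩, then {δ^{k−1}V_1, δ^{k−1}V_2, …, δ^{k−1}V_r} is a basis of the cocircuit space of Sim_k^n(S_k). -/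
/-!
Common definitions for simplicial matroids, following Cordovil–Lemos–Linhares Sales,
"Dirac's theorem on simplicial matroids".

We model `[n] = {1,…,n}` by `Fin n`, and a subset of `[n]` by a `Finset (Fin n)`.
A family `S_k ⊆ C([n],k)` is a `Finset (Finset (Fin n))` (all of whose members
have cardinality `k`, which is imposed by hypotheses in the theorems).
-/

open Finset

lemma staircase_li {𝔽 : Type*} [Field 𝔽] {ι : Type*} [LinearOrder ι] {α : Type*}
    {f : ι → α → 𝔽} (h : ∀ j, ∃ F, f j F ≠ 0 ∧ ∀ i < j, f i F = 0) :
    LinearIndependent 𝔽 f := by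
  classical
  rw [linearIndependent_iff']
  intro s g hsum i hi
  by_contra hgi
  have hne : (s.filter fun i => g i ≠ 0).Nonempty := ⟨i, Finset.mem_filter.2 ⟨hi, hgi⟩⟩
  set T := s.filter fun i => g i ≠ 0 with hT
  set j := T.max' hne with hj
  obtain ⟨F, hF0, hFlt⟩ := h j
  have key := congrFun hsum F
  simp only [Finset.sum_apply, Pi.smul_apply, smul_eq_mul, Pi.zero_apply] at key
  have h1 : ∑ i ∈ T, g i * f i F = ∑ i ∈ s, g i * f i F := by
    refine Finset.sum_subset (Finset.filter_subset _ _) fun x hx hxT => ?_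
    have : g x = 0 := by
      by_contra hgx
      exact hxT (Finset.mem_filter.2 ⟨hx, hgx⟩)
    rw [this, zero_mul]
  have h2 : ∑ i ∈ T, g i * f i F = g j * f j F := by
    refine Finset.sum_eq_single j (fun b hb hbj => ?_) (fun hj' => absurd (T.max'_mem hne) hj')
    have : b < j := lt_of_le_of_ne (T.le_max' b hb) hbj
    rw [hFlt b this, mul_zero]
  have hgj : g j ≠ 0 := (Finset.mem_filter.1 (T.max'_mem hne)).2
  exact mul_ne_zero hgj hF0 (by rw [← h2, h1, key])

/-- The dot-pairing as a linear map into the dual. -/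
noncomputable def dotL (𝔽 : Type*) [Field 𝔽] (ι : Type*) [Fintype ι] :
    (ι → 𝔽) →ₗ[𝔽] Module.Dual 𝔽 (ι → 𝔽) where
  toFun w :=
    { toFun := fun v => ∑ i, v i * w i
      map_add' := fun a b => by simp [add_mul, Finset.sum_add_distrib]
      map_smul' := fun c a => by simp [Finset.mul_sum, mul_assoc] }
  map_add' a b := by
    ext v; simp [mul_add, Finset.sum_add_distrib]
  map_smul' c a := by
    ext v; simp [Finset.mul_sum]; ring_nf; simp [mul_comm, mul_left_comm]

lemma dotL_apply {𝔽 : Type*} [Field 𝔽] {ι : Type*} [Fintype ι] (w v : ι → 𝔽) :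
    dotL 𝔽 ι w v = ∑ i, v i * w i := rfl

lemma dotL_injective (𝔽 : Type*) [Field 𝔽] (ι : Type*) [Fintype ι] [DecidableEq ι] :
    Function.Injective (dotL 𝔽 ι) := by
  intro a b hab
  ext i
  have := congrArg (fun f => f (Pi.single i 1)) hab
  simpa [dotL_apply, Pi.single_apply, Finset.sum_ite_eq'] using this

lemma finrank_ann (𝔽 : Type*) [Field 𝔽] (ι : Type*) [Fintype ι]
    (W : Submodule 𝔽 (ι → 𝔽)) :
    Module.finrank 𝔽 (Submodule.dualAnnihilator W) + Module.finrank 𝔽 W = Fintype.card ι := by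
  have e : ((ι → 𝔽) ⧸ W) ≃ₗ[𝔽] W.dualAnnihilator := Subspace.quotEquivAnnihilator W
  have e2 : Module.finrank 𝔽 ((ι → 𝔽) ⧸ W) = Module.finrank 𝔽 W.dualAnnihilator :=
    LinearEquiv.finrank_eq e
  have h2 := Submodule.finrank_quotient_add_finrank W
  rw [← e2, h2, Module.finrank_fintype_fun_eq_card]


theorem stmt4 (𝔽 : Type*) [Field 𝔽] (n k : ℕ) (hk : 2 ≤ k) (hkn : k ≤ n)
    (Sk : Finset (Finset (Fin n))) (hSk : ∀ F ∈ Sk, F.card = k)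
    (r : ℕ) (hr : simRank 𝔽 n k Sk = r) (V : ℕ → Finset (Fin n))
    (hV : BasicLinearSeq 𝔽 n k Sk r V) :
    LinearIndependent 𝔽 (fun j : Fin r => cobdry 𝔽 Sk (V j.1)) ∧
      Submodule.span 𝔽 (Set.range fun j : Fin r => cobdry 𝔽 Sk (V j.1))
        = cocircSpace 𝔽 n k Sk := by
  classical
  obtain ⟨hrank, hcards, hcoc⟩ := hV
  -- staircase witnesses from nonemptiness of the cocircuits C*_j
  have hwit : ∀ j : Fin r, ∃ F : ↥Sk,
      cobdry 𝔽 Sk (V j.1) F ≠ 0 ∧ ∀ i : Fin r, i < j → cobdry 𝔽 Sk (V i.1) F = 0 := by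
    intro j
    obtain ⟨_, hlt, _⟩ := hcoc j.1 j.2
    have hCne : (Cstar 𝔽 Sk V j.1).Nonempty := by
      rw [Finset.nonempty_iff_ne_empty]
      intro hC
      rw [hC, Finset.sdiff_empty] at hlt
      exact lt_irrefl _ hlt
    obtain ⟨F, hF⟩ := hCne
    rw [Cstar, Finset.mem_sdiff] at hF
    obtain ⟨hFj, hFnot⟩ := hF
    simp only [suppδ, suppFin, Finset.mem_image, Finset.mem_filter] at hFj
    obtain ⟨a, ⟨-, ha2⟩, rfl⟩ := hFj
    refine ⟨a, ha2, ?_⟩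
    intro i hij
    by_contra hne
    apply hFnot
    rw [Finset.mem_biUnion]
    refine ⟨i.1, Finset.mem_range.2 hij, ?_⟩
    simp only [suppδ, suppFin, Finset.mem_image, Finset.mem_filter]
    exact ⟨a, ⟨Finset.mem_attach _ _, hne⟩, rfl⟩
  have hli : LinearIndependent 𝔽 (fun j : Fin r => cobdry 𝔽 Sk (V j.1)) :=
    staircase_li hwit
  -- each coboundary lies in the cocircuit space
  have hmem : ∀ j : Fin r, cobdry 𝔽 Sk (V j.1) ∈ cocircSpace 𝔽 n k Sk := by
    intro j
    show ∀ v ∈ LinearMap.ker (bdryMap 𝔽 n k Sk), ∑ F, v F * cobdry 𝔽 Sk (V j.1) F = 0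
    intro v hv
    have h1 : bdryMap 𝔽 n k Sk v = 0 := LinearMap.mem_ker.mp hv
    have h2 := congrFun h1 ⟨V j.1, hcards j.1 j.2⟩
    simp only [bdryMap, Matrix.mulVecLin_apply, Matrix.mulVec, dotProduct,
      Matrix.of_apply, Pi.zero_apply] at h2
    calc ∑ F, v F * cobdry 𝔽 Sk (V j.1) F
        = ∑ F : ↥Sk, ((inc (V j.1) F.1 : ℤ) : 𝔽) * v F :=
          Finset.sum_congr rfl fun F _ => mul_comm _ _
      _ = 0 := h2
  -- the rank of the boundary map is r
  have hrange : LinearMap.range (bdryMap 𝔽 n k Sk) =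
      Submodule.span 𝔽 ((fun F => bvec 𝔽 n k F) '' (Sk : Set (Finset (Fin n)))) := by
    rw [bdryMap, Matrix.range_mulVecLin]
    congr 1
    ext w
    constructor
    · rintro ⟨F, rfl⟩; exact ⟨F.1, F.2, rfl⟩
    · rintro ⟨F, hF, rfl⟩; exact ⟨⟨F, hF⟩, rfl⟩
  have hr2 : Module.finrank 𝔽 (LinearMap.range (bdryMap 𝔽 n k Sk)) = r := by
    rw [hrange]; exact hr
  -- dimension bound for the cocircuit space
  have hfin : Module.finrank 𝔽 (cocircSpace 𝔽 n k Sk) ≤ r := by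
    have hmap : Submodule.map (dotL 𝔽 ↥Sk) (cocircSpace 𝔽 n k Sk) ≤
        (LinearMap.ker (bdryMap 𝔽 n k Sk)).dualAnnihilator := by
      rintro x ⟨w, hw, rfl⟩
      rw [Submodule.mem_dualAnnihilator]
      intro v hv
      exact hw v hv
    have e : Module.finrank 𝔽 (cocircSpace 𝔽 n k Sk) =
        Module.finrank 𝔽 (Submodule.map (dotL 𝔽 ↥Sk) (cocircSpace 𝔽 n k Sk)) :=
      LinearEquiv.finrank_eq
        (Submodule.equivMapOfInjective _ (dotL_injective 𝔽 ↥Sk) _)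
    have hle := Submodule.finrank_mono hmap
    have hann := finrank_ann 𝔽 ↥Sk (LinearMap.ker (bdryMap 𝔽 n k Sk))
    have hrn := LinearMap.finrank_range_add_finrank_ker (bdryMap 𝔽 n k Sk)
    rw [Module.finrank_fintype_fun_eq_card] at hrn
    omega
  have hsd : Module.finrank 𝔽
      (Submodule.span 𝔽 (Set.range fun j : Fin r => cobdry 𝔽 Sk (V j.1))) = r := by
    rw [finrank_span_eq_card hli, Fintype.card_fin]
  have hle2 : Submodule.span 𝔽 (Set.range fun j : Fin r => cobdry 𝔽 Sk (V j.1)) ≤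
      cocircSpace 𝔽 n k Sk :=
    Submodule.span_le.2 (by rintro _ ⟨j, rfl⟩; exact hmem j)
  exact ⟨hli, Submodule.eq_of_le_of_finrank_le hle2 (by rw [hsd]; exact hfin)⟩
end

section
/- (Dirac's theorem, reformulated) Let n ≥ 2, let 𝔽 be a field and let S_2 ⊆ C([n],2). The simple graph G = ([n], S_2) is chordal if and only if the clique complex ⟨S_2⟩ is D-perfect. -/
/-!
Common definitions for simplicial matroids, following Cordovil–Lemos–Linhares Sales,
"Dirac's theorem on simplicial matroids".

We model `[n] = {1,…,n}` by `Fin n`, and a subset of `[n]` by a `Finset (Fin n)`.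
A family `S_k ⊆ C([n],k)` is a `Finset (Finset (Fin n))` (all of whose members
have cardinality `k`, which is imposed by hypotheses in the theorems).
-/

open Finset

namespace D5
open Finset

variable {𝔽 : Type*} [Field 𝔽] {n : ℕ}

lemma pair_filter_le_left {a b : Fin n} (hab : a < b) :
    ({a,b} : Finset (Fin n)).filter (fun j => j ≤ a) = {a} := by
  ext x
  simp only [mem_filter, mem_insert, mem_singleton]
  constructor
  · rintro ⟨h1 | h1, h2⟩
    · exact h1
    · exact absurd (h1 ▸ h2) (not_le.2 hab)
  · rintro rfl; exact ⟨Or.inl rfl, le_refl _⟩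

lemma pair_filter_le_right {a b : Fin n} (hab : a < b) :
    ({a,b} : Finset (Fin n)).filter (fun j => j ≤ b) = {a, b} := by
  ext x
  simp only [mem_filter, mem_insert, mem_singleton]
  constructor
  · rintro ⟨h1, _⟩; exact h1
  · rintro (rfl | rfl)
    · exact ⟨Or.inl rfl, le_of_lt hab⟩
    · exact ⟨Or.inr rfl, le_refl _⟩

lemma inc_pair {W : Finset (Fin n)} {a b : Fin n} (hab : a < b) :
    inc W {a,b} = (if W = {b} then -1 else 0) + (if W = {a} then 1 else 0) := by
  have hne : a ≠ b := hab.ne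
  have hna : a ∉ ({b} : Finset (Fin n)) := by simp [hne]
  rw [inc, show ({a,b} : Finset (Fin n)) = insert a {b} from rfl,
    Finset.sum_insert hna, Finset.sum_singleton]
  rw [show (insert a {b} : Finset (Fin n)) = {a, b} from rfl]
  rw [Finset.erase_insert hna, Finset.erase_insert_of_ne hne, Finset.erase_singleton,
    pair_filter_le_left hab, pair_filter_le_right hab]
  have hc2 : ({a,b} : Finset (Fin n)).card = 2 := Finset.card_pair hne
  rw [Finset.card_singleton, hc2]
  norm_num

lemma inc_singleton_of_not_mem {W : Finset (Fin n)} {v : Fin n} (hv : v ∉ W) :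
    inc ({v} : Finset (Fin n)) W = 0 := by
  rw [inc]
  apply Finset.sum_eq_zero
  intro i hi
  have : ({v} : Finset (Fin n)) ≠ W.erase i := by
    intro h
    have : v ∈ W.erase i := by rw [← h]; exact Finset.mem_singleton_self v
    exact hv (Finset.mem_of_mem_erase this)
  simp [this]

/-- the elementary vector `e_u - e_v` in `𝔽^{C([n],1)}` -/
def evec (𝔽 : Type*) [Field 𝔽] {n : ℕ} (u v : Fin n) : Csets n 1 → 𝔽 :=
  fun W => (if W.1 = {u} then 1 else 0) - (if W.1 = {v} then 1 else 0)

lemma evec_swap (u v : Fin n) : evec 𝔽 v u = - evec 𝔽 u v := by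
  funext W; simp only [evec, Pi.neg_apply]; ring

lemma span_singleton_neg' {M : Type*} [AddCommGroup M] [Module 𝔽 M] (v : M) :
    Submodule.span 𝔽 ({-v} : Set M) = Submodule.span 𝔽 {v} := by
  apply le_antisymm
  · rw [Submodule.span_le, Set.singleton_subset_iff]
    exact Submodule.neg_mem _ (Submodule.mem_span_singleton_self v)
  · rw [Submodule.span_le, Set.singleton_subset_iff]
    have := Submodule.neg_mem (Submodule.span 𝔽 ({-v} : Set M)) (Submodule.mem_span_singleton_self (-v))
    rwa [neg_neg] at this

lemma bvec_pair {a b : Fin n} (hab : a < b) :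
    bvec 𝔽 n 2 {a,b} = evec 𝔽 a b := by
  funext W
  rw [bvec, inc_pair hab, evec]
  push_cast
  split_ifs with h1 h2 h2 <;>
    first
      | ring
      | (exact absurd (h2 ▸ h1) (by simp [Finset.singleton_inj]; exact fun h => absurd h hab.ne'))

lemma bvec_pair_cases {e : Finset (Fin n)} (he : e.card = 2) :
    ∃ a b : Fin n, a ≠ b ∧ e = {a,b} ∧ bvec 𝔽 n 2 e = evec 𝔽 a b := by
  obtain ⟨a, b, hab, rfl⟩ := Finset.card_eq_two.1 he
  rcases lt_or_gt_of_ne hab with h | h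
  · exact ⟨a, b, hab, rfl, bvec_pair h⟩
  · exact ⟨b, a, hab.symm, Finset.pair_comm a b, by rw [Finset.pair_comm a b]; exact bvec_pair h⟩

/-- the coordinate corresponding to a vertex -/
def pt (v : Fin n) : Csets n 1 := ⟨{v}, Finset.card_singleton v⟩

lemma evec_at (u v w : Fin n) :
    evec 𝔽 u v (pt w) = (if w = u then 1 else 0) - (if w = v then 1 else 0) := by
  simp [evec, pt, Finset.singleton_inj]

lemma evec_at_not_mem {u v w : Fin n} (hu : w ≠ u) (hv : w ≠ v) :
    evec 𝔽 u v (pt w) = 0 := by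
  rw [evec_at]; simp [hu, hv]

lemma evec_ne_zero {u v : Fin n} (h : u ≠ v) : evec 𝔽 u v ≠ 0 := by
  intro hz
  have := congrFun hz (pt u)
  rw [evec_at] at this
  simp [h] at this

lemma bvec_ne_zero {e : Finset (Fin n)} (he : e.card = 2) : bvec 𝔽 n 2 e ≠ 0 := by
  obtain ⟨a, b, hab, -, hb⟩ := bvec_pair_cases (𝔽 := 𝔽) he
  rw [hb]; exact evec_ne_zero hab

lemma bvec_at_not_mem {e : Finset (Fin n)} (he : e.card = 2) {v : Fin n} (hv : v ∉ e) :
    bvec 𝔽 n 2 e (pt v) = 0 := by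
  obtain ⟨a, b, hab, rfl, hb⟩ := bvec_pair_cases (𝔽 := 𝔽) he
  rw [hb]
  exact evec_at_not_mem (fun h => hv (by simp [h])) (fun h => hv (by simp [h]))

lemma bvec_at_mem {e : Finset (Fin n)} (he : e.card = 2) {v : Fin n} (hv : v ∈ e) :
    bvec 𝔽 n 2 e (pt v) ≠ 0 := by
  obtain ⟨a, b, hab, rfl, hb⟩ := bvec_pair_cases (𝔽 := 𝔽) he
  rw [hb, evec_at]
  rcases Finset.mem_insert.1 hv with rfl | hv
  · simp [hab]
  · rw [Finset.mem_singleton] at hv; subst hv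
    simp [hab.symm]

lemma span_pair_bvec {a b : Fin n} (hab : a ≠ b) :
    Submodule.span 𝔽 {bvec 𝔽 n 2 ({a,b} : Finset (Fin n))} = Submodule.span 𝔽 {evec 𝔽 a b} := by
  obtain ⟨x, y, hxy, hxy2, hb⟩ := bvec_pair_cases (𝔽 := 𝔽) (Finset.card_pair hab)
  rw [hb]
  -- {a,b} = {x,y} so (x,y) = (a,b) or (b,a)
  have : ({a, b} : Finset (Fin n)) = {x, y} := hxy2
  have hmem : a ∈ ({x, y} : Finset (Fin n)) := this ▸ Finset.mem_insert_self a {b}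
  rcases Finset.mem_insert.1 hmem with rfl | ha
  · -- a = x, then b = y
    have : b ∈ ({a, y} : Finset (Fin n)) := hxy2 ▸ Finset.mem_insert.2 (Or.inr (Finset.mem_singleton_self b))
    rcases Finset.mem_insert.1 this with rfl | hbb
    · exact absurd rfl hab
    · rw [Finset.mem_singleton] at hbb; subst hbb; rfl
  · rw [Finset.mem_singleton] at ha; subst ha
    have : b ∈ ({x, a} : Finset (Fin n)) := hxy2 ▸ Finset.mem_insert.2 (Or.inr (Finset.mem_singleton_self b))
    rcases Finset.mem_insert.1 this with rfl | hbb
    · rw [evec_swap, span_singleton_neg']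
    · rw [Finset.mem_singleton] at hbb; subst hbb; exact absurd rfl hab

end D5
namespace D5
variable {𝔽 : Type*} [Field 𝔽] {n : ℕ}

/-- span of the boundary vectors of an edge set -/
noncomputable def spanOf (𝔽 : Type*) [Field 𝔽] {n : ℕ} (E : Finset (Finset (Fin n))) :
    Submodule 𝔽 (Csets n 1 → 𝔽) :=
  Submodule.span 𝔽 ((fun F => bvec 𝔽 n 2 F) '' (E : Set (Finset (Fin n))))

lemma simRank_eq_finrank (E : Finset (Finset (Fin n))) :
    simRank 𝔽 n 2 E = Module.finrank 𝔽 (spanOf 𝔽 E) := rfl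

lemma spanOf_mono {E E' : Finset (Finset (Fin n))} (h : E ⊆ E') : spanOf 𝔽 E ≤ spanOf 𝔽 E' :=
  Submodule.span_mono (Set.image_mono (by exact_mod_cast h))

lemma simRank_mono {E E' : Finset (Finset (Fin n))} (h : E ⊆ E') :
    simRank 𝔽 n 2 E ≤ simRank 𝔽 n 2 E' := by
  rw [simRank_eq_finrank, simRank_eq_finrank]
  exact Submodule.finrank_mono (spanOf_mono h)

lemma simRank_empty : simRank 𝔽 n 2 (∅ : Finset (Finset (Fin n))) = 0 := by
  rw [simRank_eq_finrank]
  have : spanOf 𝔽 (∅ : Finset (Finset (Fin n))) = ⊥ := by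
    rw [spanOf]; simp
  rw [this, finrank_bot]

lemma simRank_pos {E : Finset (Finset (Fin n))} {e : Finset (Fin n)}
    (he : e ∈ E) (hc : e.card = 2) : 0 < simRank 𝔽 n 2 E := by
  rw [simRank_eq_finrank]
  have h1 : Submodule.span 𝔽 {bvec 𝔽 n 2 e} ≤ spanOf 𝔽 E := by
    rw [Submodule.span_le, Set.singleton_subset_iff]
    exact Submodule.subset_span ⟨e, by exact_mod_cast he, rfl⟩
  have h2 := Submodule.finrank_mono (R := 𝔽) h1
  have h3 : (1:ℕ) ≤ Module.finrank 𝔽 (spanOf 𝔽 E) :=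
    le_trans (le_of_eq (finrank_span_singleton (bvec_ne_zero hc)).symm) h2
  exact lt_of_lt_of_le zero_lt_one h3

lemma not_mem_span_avoid {E : Finset (Finset (Fin n))} {v : Fin n}
    (hE : ∀ F ∈ E, F.card = 2 ∧ v ∉ F) {e : Finset (Fin n)} (hc : e.card = 2) (hv : v ∈ e) :
    bvec 𝔽 n 2 e ∉ spanOf 𝔽 E := by
  intro hmem
  have hker : spanOf 𝔽 E ≤ LinearMap.ker (LinearMap.proj (R := 𝔽) (φ := fun _ : Csets n 1 => 𝔽) (pt v)) := by
    rw [spanOf, Submodule.span_le]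
    rintro x ⟨F, hF, rfl⟩
    simp only [SetLike.mem_coe, LinearMap.mem_ker, LinearMap.proj_apply]
    exact bvec_at_not_mem (hE F (by exact_mod_cast hF)).1 (hE F (by exact_mod_cast hF)).2
  have := hker hmem
  simp only [LinearMap.mem_ker, LinearMap.proj_apply] at this
  exact bvec_at_mem hc hv this

lemma triangle_span {u v w : Fin n} (hvu : v ≠ u) (huw : u ≠ w) (hvw : v ≠ w) :
    bvec 𝔽 n 2 ({v,w} : Finset (Fin n)) ∈
      Submodule.span 𝔽 ({bvec 𝔽 n 2 ({v,u} : Finset (Fin n)),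
        bvec 𝔽 n 2 ({u,w} : Finset (Fin n))} : Set (Csets n 1 → 𝔽)) := by
  have h1 : bvec 𝔽 n 2 ({v,w} : Finset (Fin n)) ∈ Submodule.span 𝔽 {evec 𝔽 v w} := by
    rw [← span_pair_bvec hvw]; exact Submodule.mem_span_singleton_self _
  have h2 : evec 𝔽 v w = evec 𝔽 v u + evec 𝔽 u w := by
    funext W; simp only [evec, Pi.add_apply]; ring
  have h3 : Submodule.span 𝔽 ({evec 𝔽 v w} : Set (Csets n 1 → 𝔽)) ≤
      Submodule.span 𝔽 ({evec 𝔽 v u, evec 𝔽 u w} : Set (Csets n 1 → 𝔽)) := by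
    rw [Submodule.span_le, Set.singleton_subset_iff, h2]
    exact Submodule.add_mem _ (Submodule.subset_span (by simp)) (Submodule.subset_span (by simp))
  have h4 : Submodule.span 𝔽 ({evec 𝔽 v u, evec 𝔽 u w} : Set (Csets n 1 → 𝔽)) ≤
      Submodule.span 𝔽 ({bvec 𝔽 n 2 ({v,u} : Finset (Fin n)),
        bvec 𝔽 n 2 ({u,w} : Finset (Fin n))} : Set (Csets n 1 → 𝔽)) := by
    apply Submodule.span_le.2
    intro x hx
    rw [Set.mem_insert_iff, Set.mem_singleton_iff] at hx
    rcases hx with rfl | rfl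
    · have h5 : evec 𝔽 v u ∈ Submodule.span 𝔽 {bvec 𝔽 n 2 ({v,u} : Finset (Fin n))} := by
        rw [span_pair_bvec hvu]; exact Submodule.mem_span_singleton_self _
      exact Submodule.span_mono (Set.singleton_subset_iff.2 (by simp)) h5
    · have h5 : evec 𝔽 u w ∈ Submodule.span 𝔽 {bvec 𝔽 n 2 ({u,w} : Finset (Fin n))} := by
        rw [span_pair_bvec huw]; exact Submodule.mem_span_singleton_self _
      exact Submodule.span_mono (Set.singleton_subset_iff.2 (by simp)) h5
  exact h4 (h3 h1)

/-- the star of a vertex in an edge set -/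
def star (E : Finset (Finset (Fin n))) (v : Fin n) : Finset (Finset (Fin n)) :=
  E.filter (fun F => v ∈ F)

lemma star_subset {E : Finset (Finset (Fin n))} {v : Fin n} : star E v ⊆ E :=
  Finset.filter_subset _ _

lemma mem_star {E : Finset (Finset (Fin n))} {v : Fin n} {F : Finset (Fin n)} :
    F ∈ star E v ↔ F ∈ E ∧ v ∈ F := Finset.mem_filter

lemma pair_of_mem_card_two {F : Finset (Fin n)} {v : Fin n} (hc : F.card = 2) (hv : v ∈ F) :
    ∃ w, w ≠ v ∧ F = {v, w} := by
  obtain ⟨a, b, hab, rfl⟩ := Finset.card_eq_two.1 hc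
  rcases Finset.mem_insert.1 hv with rfl | hv'
  · exact ⟨b, hab.symm, rfl⟩
  · rw [Finset.mem_singleton] at hv'; subst hv'
    exact ⟨a, hab, Finset.pair_comm a v⟩

lemma simRank_sdiff_star_lt {E : Finset (Finset (Fin n))} {v : Fin n}
    (hE : ∀ F ∈ E, F.card = 2) {e : Finset (Fin n)} (he : e ∈ E) (hv : v ∈ e) :
    simRank 𝔽 n 2 (E \ star E v) < simRank 𝔽 n 2 E := by
  rw [simRank_eq_finrank, simRank_eq_finrank]
  apply Submodule.finrank_lt_finrank_of_lt
  rw [lt_iff_le_and_ne]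
  refine ⟨spanOf_mono (Finset.sdiff_subset), fun heq => ?_⟩
  have hmem : bvec 𝔽 n 2 e ∈ spanOf 𝔽 E :=
    Submodule.subset_span ⟨e, by exact_mod_cast he, rfl⟩
  rw [← heq] at hmem
  refine not_mem_span_avoid (v := v) ?_ (hE e he) hv hmem
  intro F hF
  rw [Finset.mem_sdiff] at hF
  exact ⟨hE F hF.1, fun hvF => hF.2 (mem_star.2 ⟨hF.1, hvF⟩)⟩

lemma spanOf_sdiff_eq {E : Finset (Finset (Fin n))} {v : Fin n}
    (hE : ∀ F ∈ E, F.card = 2)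
    (hsimp : ∀ y z : Fin n, y ≠ z → ({v,y} : Finset (Fin n)) ∈ E →
      ({v,z} : Finset (Fin n)) ∈ E → ({y,z} : Finset (Fin n)) ∈ E)
    {C' : Finset (Finset (Fin n))} (hC' : C' ⊂ star E v) :
    spanOf 𝔽 (E \ C') = spanOf 𝔽 E := by
  apply le_antisymm (spanOf_mono Finset.sdiff_subset)
  rw [spanOf, Submodule.span_le]
  rintro x ⟨F, hF, rfl⟩
  have hFE : F ∈ E := by exact_mod_cast hF
  by_cases hFC : F ∈ C'
  · -- F is a star edge removed by C'
    have hFstar : F ∈ star E v := hC'.1 hFC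
    have hvF : v ∈ F := (mem_star.1 hFstar).2
    obtain ⟨w, hwv, rfl⟩ := pair_of_mem_card_two (hE F hFE) hvF
    obtain ⟨e₀, he₀s, he₀C⟩ := Finset.exists_of_ssubset hC'
    have hve₀ : v ∈ e₀ := (mem_star.1 he₀s).2
    have he₀E : e₀ ∈ E := (mem_star.1 he₀s).1
    obtain ⟨u, huv, rfl⟩ := pair_of_mem_card_two (hE e₀ he₀E) hve₀
    by_cases hwu : w = u
    · subst hwu
      exact Submodule.subset_span ⟨{v,w}, by
        simp only [Finset.coe_sdiff, Set.mem_diff, Finset.mem_coe]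
        exact ⟨hFE, he₀C⟩, rfl⟩
    · have htri := triangle_span (𝔽 := 𝔽) (n := n) (u := u) (v := v) (w := w)
        huv.symm (fun h => hwu h.symm) hwv.symm
      have hpair : ({bvec 𝔽 n 2 ({v,u} : Finset (Fin n)),
          bvec 𝔽 n 2 ({u,w} : Finset (Fin n))} : Set (Csets n 1 → 𝔽)) ⊆ spanOf 𝔽 (E \ C') := by
        intro x hx
        rw [Set.mem_insert_iff, Set.mem_singleton_iff] at hx
        rcases hx with rfl | rfl
        · exact Submodule.subset_span ⟨{v,u}, by
            simp only [Finset.coe_sdiff, Set.mem_diff, Finset.mem_coe]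
            exact ⟨he₀E, he₀C⟩, rfl⟩
        · have huwE : ({u,w} : Finset (Fin n)) ∈ E := by
            refine hsimp u w (fun h => hwu h.symm) he₀E hFE
          have huwC : ({u,w} : Finset (Fin n)) ∉ C' := by
            intro h
            have := (mem_star.1 (hC'.1 h)).2
            rw [Finset.mem_insert, Finset.mem_singleton] at this
            rcases this with h' | h'
            · exact huv h'.symm
            · exact hwv h'.symm
          exact Submodule.subset_span ⟨{u,w}, by
            simp only [Finset.coe_sdiff, Set.mem_diff, Finset.mem_coe]
            exact ⟨huwE, huwC⟩, rfl⟩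
      exact Submodule.span_le.2 hpair htri
  · exact Submodule.subset_span ⟨F, by
      simp only [Finset.coe_sdiff, Set.mem_diff, Finset.mem_coe]
      exact ⟨hFE, hFC⟩, rfl⟩

lemma simRank_sdiff_proper_eq {E : Finset (Finset (Fin n))} {v : Fin n}
    (hE : ∀ F ∈ E, F.card = 2)
    (hsimp : ∀ y z : Fin n, y ≠ z → ({v,y} : Finset (Fin n)) ∈ E →
      ({v,z} : Finset (Fin n)) ∈ E → ({y,z} : Finset (Fin n)) ∈ E)
    {C' : Finset (Finset (Fin n))} (hC' : C' ⊂ star E v) :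
    simRank 𝔽 n 2 (E \ C') = simRank 𝔽 n 2 E := by
  rw [simRank_eq_finrank, simRank_eq_finrank, spanOf_sdiff_eq hE hsimp hC']

lemma simRank_le_sdiff_star_add_one {E : Finset (Finset (Fin n))} {v : Fin n}
    (hE : ∀ F ∈ E, F.card = 2)
    (hsimp : ∀ y z : Fin n, y ≠ z → ({v,y} : Finset (Fin n)) ∈ E →
      ({v,z} : Finset (Fin n)) ∈ E → ({y,z} : Finset (Fin n)) ∈ E)
    (hne : (star E v).Nonempty) :
    simRank 𝔽 n 2 E ≤ simRank 𝔽 n 2 (E \ star E v) + 1 := by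
  obtain ⟨e₀, he₀⟩ := hne
  have hC' : (star E v).erase e₀ ⊂ star E v := Finset.erase_ssubset he₀
  have h1 : spanOf 𝔽 (E \ (star E v).erase e₀) = spanOf 𝔽 E :=
    spanOf_sdiff_eq hE hsimp hC'
  have h2 : E \ (star E v).erase e₀ = insert e₀ (E \ star E v) := by
    ext F
    simp only [Finset.mem_sdiff, Finset.mem_erase, Finset.mem_insert, not_and]
    constructor
    · rintro ⟨hFE, hF2⟩
      by_cases h : F ∈ star E v
      · exact Or.inl (by by_contra hne'; exact (hF2 (fun h' => hne' h') h).elim)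
      · exact Or.inr ⟨hFE, h⟩
    · rintro (rfl | ⟨hFE, hFs⟩)
      · exact ⟨(mem_star.1 he₀).1, fun h _ => (h rfl).elim⟩
      · exact ⟨hFE, fun _ h => (hFs h).elim⟩
  have h3 : spanOf 𝔽 (insert e₀ (E \ star E v)) =
      Submodule.span 𝔽 {bvec 𝔽 n 2 e₀} ⊔ spanOf 𝔽 (E \ star E v) := by
    rw [spanOf, Finset.coe_insert, Set.image_insert_eq, Submodule.span_insert]; rfl
  have he₀c : e₀.card = 2 := hE e₀ (mem_star.1 he₀).1
  rw [simRank_eq_finrank, simRank_eq_finrank, ← h1, h2, h3]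
  have h4 := Submodule.finrank_sup_add_finrank_inf_eq
    (Submodule.span 𝔽 {bvec 𝔽 n 2 e₀}) (spanOf 𝔽 (E \ star E v))
  have h5 : Module.finrank 𝔽 (Submodule.span 𝔽 {bvec 𝔽 n 2 e₀}) = 1 :=
    finrank_span_singleton (bvec_ne_zero he₀c)
  have h6 : Module.finrank 𝔽 ↥(Submodule.span 𝔽 {bvec 𝔽 n 2 e₀} ⊔ spanOf 𝔽 (E \ star E v)) ≤
      Module.finrank 𝔽 (Submodule.span 𝔽 {bvec 𝔽 n 2 e₀}) +
        Module.finrank 𝔽 (spanOf 𝔽 (E \ star E v)) :=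
    le_trans (Nat.le_add_right _ _) (le_of_eq h4)
  rw [h5] at h6
  exact le_trans h6 (le_of_eq (Nat.add_comm 1 _))

end D5
namespace D5
variable {𝔽 : Type*} [Field 𝔽] {n : ℕ}

lemma isFace_iff {E : Finset (Finset (Fin n))} {F : Finset (Fin n)} :
    IsFace 2 E F ↔ F.card < 2 ∨ ∀ x ∈ F, ∀ y ∈ F, x ≠ y → ({x,y} : Finset (Fin n)) ∈ E := by
  constructor
  · rintro (h | h)
    · exact Or.inl h
    · refine Or.inr fun x hx y hy hxy => h {x,y} ?_ (Finset.card_pair hxy)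
      intro z hz
      rcases Finset.mem_insert.1 hz with rfl | hz
      · exact hx
      · rw [Finset.mem_singleton] at hz; subst hz; exact hy
  · rintro (h | h)
    · exact Or.inl h
    · refine Or.inr fun G hG hGc => ?_
      obtain ⟨x, y, hxy, rfl⟩ := Finset.card_eq_two.1 hGc
      exact h x (hG (Finset.mem_insert_self _ _)) y
        (hG (Finset.mem_insert.2 (Or.inr (Finset.mem_singleton_self _)))) hxy

lemma exists_facet {E : Finset (Finset (Fin n))} {F : Finset (Fin n)} (hF : IsFace 2 E F) :
    ∃ X, IsFacet 2 E X ∧ F ⊆ X := by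
  classical
  set Fam := Finset.univ.powerset.filter (fun G => IsFace 2 E G ∧ F ⊆ G) with hFam
  have hFmem : F ∈ Fam := by
    simp only [hFam, Finset.mem_filter, Finset.mem_powerset]
    exact ⟨Finset.subset_univ F, hF, Finset.Subset.refl F⟩
  obtain ⟨X, hXmem, hXmax⟩ := Finset.exists_max_image Fam Finset.card ⟨F, hFmem⟩
  simp only [hFam, Finset.mem_filter, Finset.mem_powerset] at hXmem
  refine ⟨X, ⟨hXmem.2.1, fun G hG hXG => ?_⟩, hXmem.2.2⟩
  have hGmem : G ∈ Fam := by
    simp only [hFam, Finset.mem_filter, Finset.mem_powerset]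
    exact ⟨Finset.subset_univ G, hG, hXmem.2.2.trans hXG⟩
  exact Finset.eq_of_subset_of_card_le hXG (hXmax G hGmem)

lemma card_two_isFace {E : Finset (Finset (Fin n))} {v y : Fin n} (hvy : v ≠ y)
    (h : ({v,y} : Finset (Fin n)) ∈ E) : IsFace 2 E ({v,y} : Finset (Fin n)) := by
  rw [isFace_iff]
  refine Or.inr fun x hx z hz hxz => ?_
  rw [Finset.mem_insert, Finset.mem_singleton] at hx hz
  rcases hx with rfl | rfl <;> rcases hz with rfl | rfl
  · exact absurd rfl hxz
  · exact h
  · rw [Finset.pair_comm]; exact h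
  · exact absurd rfl hxz

lemma simplicialFace_of_graph {E : Finset (Finset (Fin n))} {v u₀ : Fin n}
    (hu₀ : u₀ ≠ v) (hvu₀ : ({v,u₀} : Finset (Fin n)) ∈ E)
    (hcl : ∀ y z : Fin n, y ≠ v → z ≠ v → y ≠ z → ({v,y} : Finset (Fin n)) ∈ E →
      ({v,z} : Finset (Fin n)) ∈ E → ({y,z} : Finset (Fin n)) ∈ E) :
    SimplicialFace 2 E ({v} : Finset (Fin n)) := by
  classical
  set N := Finset.univ.filter (fun u => u ≠ v ∧ ({v,u} : Finset (Fin n)) ∈ E) with hN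
  set X := insert v N with hX
  have hmemN : ∀ u, u ∈ N ↔ u ≠ v ∧ ({v,u} : Finset (Fin n)) ∈ E := by
    intro u; simp [hN]
  have hu₀N : u₀ ∈ N := (hmemN u₀).2 ⟨hu₀, hvu₀⟩
  have hXface : IsFace 2 E X := by
    rw [isFace_iff]
    refine Or.inr fun x hx y hy hxy => ?_
    rw [hX, Finset.mem_insert] at hx hy
    rcases hx with rfl | hx
    · rcases hy with rfl | hy
      · exact absurd rfl hxy
      · exact ((hmemN y).1 hy).2
    · rcases hy with rfl | hy
      · rw [Finset.pair_comm]; exact ((hmemN x).1 hx).2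
      · exact hcl x y ((hmemN x).1 hx).1 ((hmemN y).1 hy).1 hxy
          ((hmemN x).1 hx).2 ((hmemN y).1 hy).2
  have hvX : v ∈ X := Finset.mem_insert_self _ _
  have hu₀X : u₀ ∈ X := Finset.mem_insert.2 (Or.inr hu₀N)
  have hGsub : ∀ G, IsFace 2 E G → X ⊆ G → G ⊆ X := by
    intro G hG hXG w hw
    by_contra hwX
    have hwv : w ≠ v := fun h => hwX (h ▸ hvX)
    have hcard : ¬ G.card < 2 := by
      have : ({v, u₀} : Finset (Fin n)) ⊆ G := by
        intro z hz
        rcases Finset.mem_insert.1 hz with rfl | hz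
        · exact hXG hvX
        · rw [Finset.mem_singleton] at hz; subst hz; exact hXG hu₀X
      have h2 := Finset.card_le_card this
      rw [Finset.card_pair (fun h => hu₀ h.symm)] at h2
      omega
    rcases isFace_iff.1 hG with h | h
    · exact hcard h
    · have : ({v,w} : Finset (Fin n)) ∈ E := h v (hXG hvX) w hw (fun h' => hwv h'.symm)
      exact hwX (Finset.mem_insert.2 (Or.inr ((hmemN w).2 ⟨hwv, this⟩)))
  have hXfacet : IsFacet 2 E X :=
    ⟨hXface, fun G hG hXG => Finset.Subset.antisymm hXG (hGsub G hG hXG)⟩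
  refine ⟨X, ⟨hXfacet, ?_⟩, ?_⟩
  · rw [Finset.ssubset_iff_of_subset (Finset.singleton_subset_iff.2 hvX)]
    exact ⟨u₀, hu₀X, fun h => hu₀ (Finset.mem_singleton.1 h)⟩
  · rintro Y ⟨hYfacet, hY⟩
    have hvY : v ∈ Y := hY.1 (Finset.mem_singleton_self v)
    obtain ⟨w, hwY, hwv'⟩ := Finset.exists_of_ssubset hY
    have hwv : w ≠ v := fun h => hwv' (h ▸ Finset.mem_singleton_self v)
    have hYcard : ¬ Y.card < 2 := by
      have : ({v, w} : Finset (Fin n)) ⊆ Y := by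
        intro z hz
        rcases Finset.mem_insert.1 hz with rfl | hz
        · exact hvY
        · rw [Finset.mem_singleton] at hz; subst hz; exact hwY
      have h2 := Finset.card_le_card this
      rw [Finset.card_pair (fun h => hwv h.symm)] at h2
      omega
    have hYsubX : Y ⊆ X := by
      intro z hz
      by_cases hzv : z = v
      · exact hzv ▸ hvX
      · rcases isFace_iff.1 hYfacet.1 with h | h
        · exact absurd h hYcard
        · have : ({v,z} : Finset (Fin n)) ∈ E := h v hvY z hz (fun h' => hzv h'.symm)
          exact Finset.mem_insert.2 (Or.inr ((hmemN z).2 ⟨hzv, this⟩))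
    exact hYfacet.2 X hXface hYsubX

lemma simplicialFace_to_graph {E : Finset (Finset (Fin n))} (hE : ∀ F ∈ E, F.card = 2)
    {v : Fin n} (h : SimplicialFace 2 E ({v} : Finset (Fin n))) :
    (∃ u, u ≠ v ∧ ({v,u} : Finset (Fin n)) ∈ E) ∧
      ∀ y z : Fin n, y ≠ z → ({v,y} : Finset (Fin n)) ∈ E →
        ({v,z} : Finset (Fin n)) ∈ E → ({y,z} : Finset (Fin n)) ∈ E := by
  obtain ⟨X, ⟨hXfacet, hX⟩, huniq⟩ := h
  have hvX : v ∈ X := hX.1 (Finset.mem_singleton_self v)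
  obtain ⟨u, huX, huv'⟩ := Finset.exists_of_ssubset hX
  have huv : u ≠ v := fun h' => huv' (h' ▸ Finset.mem_singleton_self v)
  have hXcard : ¬ X.card < 2 := by
    have : ({v, u} : Finset (Fin n)) ⊆ X := by
      intro z hz
      rcases Finset.mem_insert.1 hz with rfl | hz
      · exact hvX
      · rw [Finset.mem_singleton] at hz; subst hz; exact huX
    have h2 := Finset.card_le_card this
    rw [Finset.card_pair (fun h' => huv h'.symm)] at h2
    omega
  have hXpairs : ∀ x ∈ X, ∀ y ∈ X, x ≠ y → ({x,y} : Finset (Fin n)) ∈ E := by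
    rcases isFace_iff.1 hXfacet.1 with h | h
    · exact absurd h hXcard
    · exact h
  constructor
  · exact ⟨u, huv, hXpairs v hvX u huX (fun h' => huv h'.symm)⟩
  · intro y z hyz hvy hvz
    have hyv : y ≠ v := by
      intro h'; subst h'
      have := hE _ hvy
      simp at this
    have hzv : z ≠ v := by
      intro h'; subst h'
      have := hE _ hvz
      simp at this
    -- the edge {v,y} is a face, extend to a facet, which must be X
    have hyX : y ∈ X := by
      obtain ⟨X₁, hX₁facet, hsub₁⟩ := exists_facet (card_two_isFace (fun h' => hyv h'.symm) hvy)
      have hssub : ({v} : Finset (Fin n)) ⊂ X₁ := by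
        rw [Finset.ssubset_iff_of_subset (Finset.singleton_subset_iff.2
          (hsub₁ (Finset.mem_insert_self _ _)))]
        exact ⟨y, hsub₁ (Finset.mem_insert.2 (Or.inr (Finset.mem_singleton_self _))),
          fun h' => hyv (Finset.mem_singleton.1 h')⟩
      have := huniq X₁ ⟨hX₁facet, hssub⟩
      rw [← this]
      exact hsub₁ (Finset.mem_insert.2 (Or.inr (Finset.mem_singleton_self _)))
    have hzX : z ∈ X := by
      obtain ⟨X₁, hX₁facet, hsub₁⟩ := exists_facet (card_two_isFace (fun h' => hzv h'.symm) hvz)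
      have hssub : ({v} : Finset (Fin n)) ⊂ X₁ := by
        rw [Finset.ssubset_iff_of_subset (Finset.singleton_subset_iff.2
          (hsub₁ (Finset.mem_insert_self _ _)))]
        exact ⟨z, hsub₁ (Finset.mem_insert.2 (Or.inr (Finset.mem_singleton_self _))),
          fun h' => hzv (Finset.mem_singleton.1 h')⟩
      have := huniq X₁ ⟨hX₁facet, hssub⟩
      rw [← this]
      exact hsub₁ (Finset.mem_insert.2 (Or.inr (Finset.mem_singleton_self _)))
    exact hXpairs y hyX z hzX hyz

/- ## suppδ and delSeq lemmas -/

lemma mem_suppδ {E : Finset (Finset (Fin n))} {V F : Finset (Fin n)} :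
    F ∈ suppδ 𝔽 E V ↔ F ∈ E ∧ ((inc V F : ℤ) : 𝔽) ≠ 0 := by
  classical
  simp only [suppδ, suppFin, cobdry, Finset.mem_image, Finset.mem_filter, Finset.mem_attach,
    true_and, Subtype.exists]
  constructor
  · rintro ⟨a, ha, h, rfl⟩
    exact ⟨ha, (Finset.mem_filter.1 h).2⟩
  · rintro ⟨hF, h⟩
    exact ⟨F, hF, Finset.mem_filter.2 ⟨Finset.mem_attach _ _, h⟩, rfl⟩

lemma suppδ_subset {E : Finset (Finset (Fin n))} {V : Finset (Fin n)} :
    suppδ 𝔽 E V ⊆ E := fun F hF => (mem_suppδ.1 hF).1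

lemma inc_singleton_cast_ne_zero_iff {F : Finset (Fin n)} (hc : F.card = 2) {v : Fin n} :
    ((inc ({v} : Finset (Fin n)) F : ℤ) : 𝔽) ≠ 0 ↔ v ∈ F := by
  constructor
  · intro h
    by_contra hv
    rw [inc_singleton_of_not_mem hv] at h
    simp at h
  · intro hv
    obtain ⟨w, hwv, rfl⟩ := pair_of_mem_card_two hc hv
    rcases lt_or_gt_of_ne (fun h => hwv h.symm : v ≠ w) with h | h
    · rw [inc_pair h]
      have : ({v} : Finset (Fin n)) ≠ {w} := fun h' => hwv (Finset.singleton_inj.1 h').symm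
      simp [this]
    · rw [Finset.pair_comm, inc_pair h]
      have : ({v} : Finset (Fin n)) ≠ {w} := fun h' => hwv (Finset.singleton_inj.1 h').symm
      simp [this]

lemma suppδ_eq_star {E : Finset (Finset (Fin n))} (hE : ∀ F ∈ E, F.card = 2) (v : Fin n) :
    suppδ 𝔽 E ({v} : Finset (Fin n)) = star E v := by
  ext F
  rw [mem_suppδ, mem_star]
  constructor
  · rintro ⟨hF, h⟩
    exact ⟨hF, (inc_singleton_cast_ne_zero_iff (hE F hF)).1 h⟩
  · rintro ⟨hF, h⟩
    exact ⟨hF, (inc_singleton_cast_ne_zero_iff (hE F hF)).2 h⟩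

lemma mem_suppδ_of_subset {E Sk : Finset (Finset (Fin n))} (hsub : E ⊆ Sk)
    {V F : Finset (Fin n)} :
    F ∈ suppδ 𝔽 E V ↔ F ∈ E ∧ F ∈ suppδ 𝔽 Sk V := by
  rw [mem_suppδ, mem_suppδ]
  constructor
  · rintro ⟨hF, h⟩; exact ⟨hF, hsub hF, h⟩
  · rintro ⟨hF, _, h⟩; exact ⟨hF, h⟩

lemma suppδ_restrict {E Sk : Finset (Finset (Fin n))} (hsub : E ⊆ Sk) (V : Finset (Fin n)) :
    suppδ 𝔽 E V = E ∩ suppδ 𝔽 Sk V := by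
  ext F; rw [mem_suppδ_of_subset hsub, Finset.mem_inter]

lemma delSeq_eq (Sk : Finset (Finset (Fin n))) (V : ℕ → Finset (Fin n)) (j : ℕ) :
    delSeq 𝔽 Sk V j = Sk \ (Finset.range j).biUnion (fun i => suppδ 𝔽 Sk (V i)) := by
  induction j with
  | zero => simp [delSeq]
  | succ j ih =>
    have hsub : delSeq 𝔽 Sk V j ⊆ Sk := by rw [ih]; exact Finset.sdiff_subset
    show delSeq 𝔽 Sk V j \ suppδ 𝔽 (delSeq 𝔽 Sk V j) (V j) = _
    rw [suppδ_restrict hsub]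
    ext F
    simp only [ih, Finset.mem_sdiff, Finset.mem_inter, Finset.mem_biUnion, Finset.mem_range,
      Finset.range_add_one, Finset.mem_insert, not_exists, not_and, not_or]
    constructor
    · rintro ⟨⟨hSk, hn⟩, hn2⟩
      refine ⟨hSk, fun i hi => ?_⟩
      rcases hi with rfl | hi
      · intro hm; exact hn2 ⟨hSk, hn⟩ hm
      · exact hn i hi
    · rintro ⟨hSk, hn⟩
      exact ⟨⟨hSk, fun i hi => hn i (Or.inr hi)⟩, fun _ => hn j (Or.inl rfl)⟩

lemma delSeq_subset (Sk : Finset (Finset (Fin n))) (V : ℕ → Finset (Fin n)) (j : ℕ) :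
    delSeq 𝔽 Sk V j ⊆ Sk := by
  rw [delSeq_eq]; exact Finset.sdiff_subset

lemma Cstar_eq_suppδ_delSeq (Sk : Finset (Finset (Fin n))) (V : ℕ → Finset (Fin n)) (j : ℕ) :
    Cstar 𝔽 Sk V j = suppδ 𝔽 (delSeq 𝔽 Sk V j) (V j) := by
  have hsub : delSeq 𝔽 Sk V j ⊆ Sk := delSeq_subset _ _ _
  rw [suppδ_restrict hsub, Cstar, delSeq_eq]
  ext F
  have hs : F ∈ suppδ 𝔽 Sk (V j) → F ∈ Sk := fun h => suppδ_subset h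
  simp only [Finset.mem_sdiff, Finset.mem_inter, Finset.mem_biUnion, Finset.mem_range,
    not_exists, not_and]
  constructor
  · rintro ⟨hF, hn⟩
    exact ⟨⟨hs hF, fun i hi hm => hn i hi hm⟩, hF⟩
  · rintro ⟨⟨hSk, hn⟩, hF⟩
    exact ⟨hF, fun i hi hm => hn i hi hm⟩

lemma delSeq_succ_eq_sdiff_Cstar (Sk : Finset (Finset (Fin n))) (V : ℕ → Finset (Fin n)) (j : ℕ) :
    delSeq 𝔽 Sk V (j + 1) = delSeq 𝔽 Sk V j \ Cstar 𝔽 Sk V j := by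
  rw [Cstar_eq_suppδ_delSeq]
  rfl

end D5
namespace D5
open SimpleGraph

section walks
variable {V : Type*} [DecidableEq V] {G G' : SimpleGraph V}

lemma support_mapLe (h : G ≤ G') {u v : V} (p : G.Walk u v) :
    (p.mapLe h).support = p.support := by
  simp only [Walk.mapLe, Walk.support_map]
  exact List.map_id _

lemma edges_mapLe (h : G ≤ G') {u v : V} (p : G.Walk u v) :
    (p.mapLe h).edges = p.edges := by
  simp only [Walk.mapLe, Walk.edges_map]
  have h2 : ∀ e : Sym2 V, Sym2.map (⇑(SimpleGraph.Hom.ofLE h)) e = e := by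
    intro e; induction e using Sym2.ind; rfl
  rw [List.map_congr_left fun e _ => h2 e]
  exact List.map_id _

lemma length_mapLe (h : G ≤ G') {u v : V} (p : G.Walk u v) :
    (p.mapLe h).length = p.length := by
  simp [Walk.mapLe]

lemma closed_nonnil_not_nodup {a : V} (p : G.Walk a a) (hl : 0 < p.length) :
    ¬ p.support.Nodup := by
  cases p with
  | nil => simp at hl
  | cons hadj q =>
    rw [Walk.support_cons]
    intro hnod
    exact (List.nodup_cons.1 hnod).1 q.end_mem_support

lemma length_one_mem_edges {x y : V} (p : G.Walk x y) (h : p.length = 1) :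
    s(x,y) ∈ p.edges := by
  cases p with
  | nil => simp at h
  | cons hadj q =>
    have hq : q.length = 0 := by
      rw [Walk.length_cons] at h; omega
    have := Walk.eq_of_length_eq_zero hq
    subst this
    rw [Walk.edges_cons]
    exact List.mem_cons_self

lemma shortcut {s t x y : V} (p : G.Walk s t) (hx : x ∈ p.support)
    (hadj : G.Adj x y) (hy : y ∈ p.support) (hne : s(x,y) ∉ p.edges) :
    ∃ w : G.Walk s t, (∀ z ∈ w.support, z ∈ p.support) ∧ w.length < p.length := by
  obtain ⟨q₁, r₁, rfl⟩ := Walk.mem_support_iff_exists_append.1 hx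
  rcases (Walk.mem_support_append_iff _ _).1 hy with hy1 | hy2
  · -- y appears in the first part q₁ : Walk s x
    obtain ⟨q₃, r₃, rfl⟩ := Walk.mem_support_iff_exists_append.1 hy1
    -- q₃ : Walk s y, r₃ : Walk y x
    have hr₃ : 2 ≤ r₃.length := by
      by_contra hcon
      push_neg at hcon
      interval_cases h : r₃.length
      · exact hadj.ne' (Walk.eq_of_length_eq_zero h)
      · refine hne ?_
        have hmem : s(y,x) ∈ r₃.edges := length_one_mem_edges r₃ h
        rw [Sym2.eq_swap] at hmem
        rw [Walk.edges_append, Walk.edges_append]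
        exact List.mem_append.2 (Or.inl (List.mem_append.2 (Or.inr hmem)))
    refine ⟨q₃.append (Walk.cons hadj.symm r₁), ?_, ?_⟩
    · intro z hz
      rcases (Walk.mem_support_append_iff _ _).1 hz with h | h
      · exact (Walk.mem_support_append_iff _ _).2
          (Or.inl ((Walk.mem_support_append_iff _ _).2 (Or.inl h)))
      · rw [Walk.support_cons] at h
        rcases List.mem_cons.1 h with heq | h
        · rw [heq]
          exact (Walk.mem_support_append_iff _ _).2
            (Or.inl ((Walk.mem_support_append_iff _ _).2 (Or.inl q₃.end_mem_support)))
        · exact (Walk.mem_support_append_iff _ _).2 (Or.inr h)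
    · rw [Walk.length_append, Walk.length_append, Walk.length_append, Walk.length_cons]
      omega
  · -- y appears in the second part r₁ : Walk x t
    obtain ⟨q₂, r₂, rfl⟩ := Walk.mem_support_iff_exists_append.1 hy2
    -- q₂ : Walk x y, r₂ : Walk y t
    have hq₂ : 2 ≤ q₂.length := by
      by_contra hcon
      push_neg at hcon
      interval_cases h : q₂.length
      · exact hadj.ne (Walk.eq_of_length_eq_zero h)
      · refine hne ?_
        have hmem : s(x,y) ∈ q₂.edges := length_one_mem_edges q₂ h
        rw [Walk.edges_append, Walk.edges_append]
        exact List.mem_append.2 (Or.inr (List.mem_append.2 (Or.inl hmem)))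
    refine ⟨q₁.append (Walk.cons hadj r₂), ?_, ?_⟩
    · intro z hz
      rcases (Walk.mem_support_append_iff _ _).1 hz with h | h
      · exact (Walk.mem_support_append_iff _ _).2 (Or.inl h)
      · rw [Walk.support_cons] at h
        rcases List.mem_cons.1 h with heq | h
        · rw [heq]
          exact (Walk.mem_support_append_iff _ _).2 (Or.inl q₁.end_mem_support)
        · exact (Walk.mem_support_append_iff _ _).2
            (Or.inr ((Walk.mem_support_append_iff _ _).2 (Or.inr h)))
    · rw [Walk.length_append, Walk.length_append, Walk.length_append, Walk.length_cons]
      omega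

lemma cycle_neighbors_start {u : V} (c : G.Walk u u) (hc : c.IsCycle) (hl : 4 ≤ c.length) :
    ∃ p q, p ≠ q ∧ s(u,p) ∈ c.edges ∧ s(u,q) ∈ c.edges ∧ s(p,q) ∉ c.edges := by
  cases c with
  | nil => simp at hl
  | @cons _ p₀ _ hadj w =>
    have hup₀ : u ≠ p₀ := hadj.ne
    obtain ⟨q, hq, w₃, hw⟩ := Walk.exists_eq_cons_of_ne hup₀ w.reverse
    -- w.reverse = cons (hq : G.Adj u q) w₃, w₃ : Walk q p₀
    have hw2 : w = (w₃.reverse).concat hq.symm := by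
      have h1 := congrArg Walk.reverse hw
      rw [Walk.reverse_reverse, Walk.reverse_cons, ← Walk.concat_eq_append] at h1
      exact h1
    set w₂ := w₃.reverse with hw₂def
    -- basic facts
    have hnodup : (w₂.support.concat u).Nodup := by
      have := hc.support_nodup
      rw [Walk.support_cons] at this
      simp only [List.tail_cons] at this
      rw [hw2, Walk.support_concat] at this
      simpa [List.concat_eq_append] using this
    rw [List.concat_eq_append, List.nodup_append] at hnodup
    obtain ⟨hw₂nodup, -, hdisj⟩ := hnodup
    have huW : u ∉ w₂.support := fun h => hdisj u h u (List.mem_singleton_self u) rfl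
    have hp₀W : p₀ ∈ w₂.support := w₂.start_mem_support
    have hqW : q ∈ w₂.support := w₂.end_mem_support
    have hp₀u : p₀ ≠ u := fun h => huW (h ▸ hp₀W)
    have hqu : q ≠ u := fun h => huW (h ▸ hqW)
    have hlw₂ : 2 ≤ w₂.length := by
      have h1 : w.length = w₂.length + 1 := by rw [hw2, Walk.length_concat]
      have h2 : (Walk.cons hadj w).length = w.length + 1 := Walk.length_cons _ _
      omega
    have hp₀q : p₀ ≠ q := by
      intro h
      subst h
      exact closed_nonnil_not_nodup w₂ (by omega) hw₂nodup
    have hedges : (Walk.cons hadj w).edges = s(u,p₀) :: (w₂.edges ++ [s(q,u)]) := by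
      rw [Walk.edges_cons, hw2, Walk.edges_concat, List.concat_eq_append]
    refine ⟨p₀, q, hp₀q, ?_, ?_, ?_⟩
    · rw [hedges]; exact List.mem_cons_self
    · rw [hedges, show s(u,q) = s(q,u) from Sym2.eq_swap]
      exact List.mem_cons.2 (Or.inr (List.mem_append.2 (Or.inr (List.mem_singleton_self _))))
    · rw [hedges]
      intro hmem
      rcases List.mem_cons.1 hmem with heq | hmem
      · rw [Sym2.eq_iff] at heq
        rcases heq with ⟨h1, -⟩ | ⟨-, h2⟩
        · exact hp₀u h1
        · exact hqu h2
      rcases List.mem_append.1 hmem with hmem | hmem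
      · -- s(p₀,q) ∈ w₂.edges
        cases hw₄ : w₂ with
        | nil => rw [hw₄] at hmem; simp at hmem
        | @cons _ x _ hadj₃ w₄ =>
          rw [hw₄] at hmem hw₂nodup hlw₂
          rw [Walk.support_cons, List.nodup_cons] at hw₂nodup
          obtain ⟨hp₀notin, hw₄nodup⟩ := hw₂nodup
          rw [Walk.edges_cons] at hmem
          rcases List.mem_cons.1 hmem with heq | hmem
          · rw [Sym2.eq_iff] at heq
            rcases heq with ⟨-, h2⟩ | ⟨h1, h2⟩
            · -- q = x
              subst h2
              refine closed_nonnil_not_nodup w₄ ?_ hw₄nodup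
              rw [Walk.length_cons] at hlw₂
              omega
            · exact hp₀q h2.symm
          · exact hp₀notin (Walk.fst_mem_support_of_mem_edges w₄ hmem)
      · rw [List.mem_singleton, Sym2.eq_iff] at hmem
        rcases hmem with ⟨h1, -⟩ | ⟨h1, -⟩
        · exact hp₀q h1
        · exact hp₀u h1

lemma cycle_neighbors {v₀ u : V} {c : G.Walk v₀ v₀} (hc : c.IsCycle) (hl : 4 ≤ c.length)
    (hu : u ∈ c.support) :
    ∃ p q, p ≠ q ∧ s(u,p) ∈ c.edges ∧ s(u,q) ∈ c.edges ∧ s(p,q) ∉ c.edges := by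
  have hperm := c.rotate_edges u hu
  have hlen : (c.rotate u hu).length = c.length := by
    have h1 := hperm.perm.length_eq
    rwa [Walk.length_edges, Walk.length_edges] at h1
  obtain ⟨p, q, hpq, h1, h2, h3⟩ :=
    cycle_neighbors_start (c.rotate u hu) (hc.rotate hu) (by omega)
  exact ⟨p, q, hpq, hperm.perm.mem_iff.1 h1, hperm.perm.mem_iff.1 h2,
    fun h => h3 (hperm.perm.mem_iff.2 h)⟩

end walks
end D5
namespace D5
open SimpleGraph

variable {n : ℕ}

/-- restriction of a graph to a finite vertex set -/
def rest (G : SimpleGraph (Fin n)) (A : Finset (Fin n)) : SimpleGraph (Fin n) where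
  Adj x y := x ∈ A ∧ y ∈ A ∧ G.Adj x y
  symm := ⟨fun x y h => ⟨h.2.1, h.1, h.2.2.symm⟩⟩
  loopless := ⟨fun x h => G.loopless.irrefl x h.2.2⟩

lemma rest_le {G : SimpleGraph (Fin n)} {A : Finset (Fin n)} : rest G A ≤ G :=
  fun _ _ h => h.2.2

lemma rest_mono {G : SimpleGraph (Fin n)} {A B : Finset (Fin n)} (h : A ⊆ B) :
    rest G A ≤ rest G B :=
  fun _ _ hadj => ⟨h hadj.1, h hadj.2.1, hadj.2.2⟩

lemma rest_adj {G : SimpleGraph (Fin n)} {A : Finset (Fin n)} {x y : Fin n} :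
    (rest G A).Adj x y ↔ x ∈ A ∧ y ∈ A ∧ G.Adj x y := Iff.rfl

lemma graphOf_mono {E E' : Finset (Finset (Fin n))} (h : E ⊆ E') : graphOf E ≤ graphOf E' :=
  fun _ _ hadj => ⟨hadj.1, h hadj.2⟩

lemma walk_support_mem {G : SimpleGraph (Fin n)} {D : Finset (Fin n)} {u t : Fin n}
    (w : (rest G D).Walk u t) (hu : u ∈ D) : ∀ x ∈ w.support, x ∈ D := by
  induction w with
  | nil => intro x hx; rw [Walk.support_nil, List.mem_singleton] at hx; exact hx ▸ hu
  | cons h p ih =>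
    intro x hx
    rw [Walk.support_cons] at hx
    rcases List.mem_cons.1 hx with rfl | hx
    · exact hu
    · exact ih h.2.1 x hx

lemma walk_end_mem {G : SimpleGraph (Fin n)} {D : Finset (Fin n)} {u t : Fin n}
    (w : (rest G D).Walk u t) (hu : u ∈ D) : t ∈ D :=
  walk_support_mem w hu t w.end_mem_support

lemma reachable_of_mem_support {H : SimpleGraph (Fin n)} {a b x : Fin n} (w : H.Walk a b)
    (hx : x ∈ w.support) : H.Reachable a x :=
  ⟨w.takeUntil x hx⟩

lemma reachable_restrict {G : SimpleGraph (Fin n)} {B B' : Finset (Fin n)} {a b : Fin n}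
    (w : (rest G B).Walk a b) (h : ∀ x ∈ w.support, x ∈ B') :
    (rest G B').Reachable a b := by
  refine ⟨w.transfer (rest G B') ?_⟩
  intro e he
  induction e using Sym2.ind with
  | _ x y =>
    have hadj := w.adj_of_mem_edges he
    exact ⟨h x (w.fst_mem_support_of_mem_edges he), h y (w.snd_mem_support_of_mem_edges he),
      hadj.2.2⟩

lemma chordal_star_del {E : Finset (Finset (Fin n))} (hG : Chordal (graphOf E)) (v : Fin n) :
    Chordal (graphOf (E \ star E v)) := by
  intro w c hc hl
  have hle : graphOf (E \ star E v) ≤ graphOf E := graphOf_mono Finset.sdiff_subset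
  obtain ⟨u₁, u₂, h1, h2, hadj, hne⟩ := hG w (c.mapLe hle) (hc.mapLe _)
    (by rw [length_mapLe]; exact hl)
  rw [support_mapLe] at h1 h2
  rw [edges_mapLe] at hne
  have hv : ∀ x ∈ c.support, x ≠ v := by
    intro x hx hxv
    obtain ⟨p, q, -, he1, -, -⟩ := cycle_neighbors hc hl hx
    have hadj' := c.adj_of_mem_edges he1
    have hmem : ({x, p} : Finset (Fin n)) ∈ E \ star E v := hadj'.2
    rw [Finset.mem_sdiff] at hmem
    exact hmem.2 (mem_star.2 ⟨hmem.1, by rw [← hxv]; exact Finset.mem_insert_self _ _⟩)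
  refine ⟨u₁, u₂, h1, h2, ⟨hadj.1, ?_⟩, hne⟩
  rw [Finset.mem_sdiff]
  refine ⟨hadj.2, fun hst => ?_⟩
  have := (mem_star.1 hst).2
  rw [Finset.mem_insert, Finset.mem_singleton] at this
  rcases this with h' | h'
  · exact hv u₁ h1 h'.symm
  · exact hv u₂ h2 h'.symm

/-- `v` is simplicial within the vertex set `A`. -/
def SimpIn (G : SimpleGraph (Fin n)) (A : Finset (Fin n)) (v : Fin n) : Prop :=
  v ∈ A ∧ ∀ y z, y ∈ A → z ∈ A → G.Adj v y → G.Adj v z → y ≠ z → G.Adj y z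

lemma sep_nbr {G : SimpleGraph (Fin n)} {A S : Finset (Fin n)} {a b : Fin n}
    (ha : a ∈ A) (hSsub : S ⊆ A \ {a,b})
    (hsep : ¬ (rest G (A \ S)).Reachable a b)
    (hmin : ∀ T ⊆ A \ {a,b}, ¬ (rest G (A \ T)).Reachable a b → S.card ≤ T.card)
    {s : Fin n} (hs : s ∈ S) :
    ∃ x, (rest G (A \ S)).Reachable a x ∧ G.Adj s x := by
  classical
  by_contra hno
  push_neg at hno
  have haS : a ∉ S := fun h => by
    have := Finset.mem_sdiff.1 (hSsub h)
    exact this.2 (Finset.mem_insert_self _ _)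
  have haAS : a ∈ A \ S := Finset.mem_sdiff.2 ⟨ha, haS⟩
  have hT : S.erase s ⊆ A \ {a,b} := (Finset.erase_subset _ _).trans hSsub
  have hsep' : ¬ (rest G (A \ S.erase s)).Reachable a b := by
    rintro ⟨w⟩
    have haA' : a ∈ A \ S.erase s :=
      Finset.mem_sdiff.2 ⟨ha, fun h => haS (Finset.mem_of_mem_erase h)⟩
    by_cases hsw : s ∈ w.support
    · have hcount := w.count_support_takeUntil_eq_one hsw
      have has : a ≠ s := fun h => haS (h ▸ hs)
      set w₁ := w.takeUntil s hsw with hw₁def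
      obtain ⟨p, hadj, w₂, hw⟩ := Walk.exists_eq_cons_of_ne (Ne.symm has) w₁.reverse
      have hsnot : s ∉ w₂.support := by
        have h1 : w₁.reverse.support = s :: w₂.support := by rw [hw, Walk.support_cons]
        have h2 : List.count s w₁.reverse.support = 1 := by
          rw [Walk.support_reverse, List.count_reverse]; exact hcount
        rw [h1, List.count_cons_self] at h2
        intro hmem
        have hpos := List.count_pos_iff.2 hmem
        omega
      have hmemw₂ : ∀ x ∈ w₂.support, x ∈ A \ S := by
        intro x hx
        have hx1 : x ∈ A \ S.erase s := by
          have hsup : w₂.support ⊆ w₁.reverse.support := by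
            rw [hw, Walk.support_cons]; exact fun z hz => List.mem_cons.2 (Or.inr hz)
          exact walk_support_mem w₁.reverse (walk_end_mem w₁ haA') x (hsup hx)
        have hxs : x ≠ s := fun h => hsnot (h ▸ hx)
        rw [Finset.mem_sdiff] at hx1 ⊢
        refine ⟨hx1.1, fun hxS => hx1.2 (Finset.mem_erase.2 ⟨hxs, hxS⟩)⟩
      have hreach : (rest G (A \ S)).Reachable a p := by
        apply reachable_restrict w₂.reverse
        intro x hx
        rw [Walk.support_reverse, List.mem_reverse] at hx
        exact hmemw₂ x hx
      exact hno p hreach hadj.2.2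
    · have hreach : (rest G (A \ S)).Reachable a b := by
        apply reachable_restrict w
        intro x hx
        have hx1 : x ∈ A \ S.erase s := walk_support_mem w haA' x hx
        have hxs : x ≠ s := fun h => hsw (h ▸ hx)
        rw [Finset.mem_sdiff] at hx1 ⊢
        exact ⟨hx1.1, fun hxS => hx1.2 (Finset.mem_erase.2 ⟨hxs, hxS⟩)⟩
      exact hsep hreach
  have h1 := hmin _ hT hsep'
  have h2 := Finset.card_erase_lt_of_mem hs
  omega

end D5
namespace D5
open SimpleGraph

variable {n : ℕ}

lemma side {G : SimpleGraph (Fin n)} {A S : Finset (Fin n)} {a b : Fin n}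
    (ha : a ∈ A) (hb : b ∈ A) (hSsub : S ⊆ A \ {a,b})
    (hsep : ¬ (rest G (A \ S)).Reachable a b)
    (hclique : ∀ s ∈ S, ∀ t ∈ S, s ≠ t → G.Adj s t)
    (IH : ∀ B : Finset (Fin n), B.card < A.card →
      (∀ x ∈ B, ∀ y ∈ B, x ≠ y → G.Adj x y) ∨
      ∃ v ∈ B, ∃ w ∈ B, v ≠ w ∧ ¬ G.Adj v w ∧ SimpIn G B v ∧ SimpIn G B w) :
    ∃ v, (rest G (A \ S)).Reachable a v ∧ SimpIn G A v := by
  classical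
  have haS : a ∉ S := fun h => (Finset.mem_sdiff.1 (hSsub h)).2 (Finset.mem_insert_self _ _)
  have hbS : b ∉ S := fun h => (Finset.mem_sdiff.1 (hSsub h)).2 (by simp)
  have haAS : a ∈ A \ S := Finset.mem_sdiff.2 ⟨ha, haS⟩
  have hreachmem : ∀ x, (rest G (A \ S)).Reachable a x → x ∈ A \ S := by
    rintro x ⟨w⟩; exact walk_end_mem w haAS
  set F1 := A.filter (fun x => x ∈ S ∨ (rest G (A \ S)).Reachable a x) with hF1
  have hmemF1 : ∀ x, x ∈ F1 ↔ x ∈ A ∧ (x ∈ S ∨ (rest G (A \ S)).Reachable a x) := by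
    intro x; simp [hF1]
  have hbF1 : b ∉ F1 := by
    rw [hmemF1]
    rintro ⟨-, hb' | hb'⟩
    exacts [hbS hb', hsep hb']
  have hcard : F1.card < A.card :=
    Finset.card_lt_card ⟨Finset.filter_subset _ _, fun hsub => hbF1 (hsub hb)⟩
  have hclose : ∀ v y, (rest G (A \ S)).Reachable a v → y ∈ A → G.Adj v y → y ∈ F1 := by
    intro v y hv hyA hadj
    rw [hmemF1]
    refine ⟨hyA, ?_⟩
    by_cases hyS : y ∈ S
    · exact Or.inl hyS
    · refine Or.inr (hv.trans ?_)
      have hvAS := hreachmem v hv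
      exact SimpleGraph.Adj.reachable ⟨hvAS, Finset.mem_sdiff.2 ⟨hyA, hyS⟩, hadj⟩
  rcases IH F1 hcard with hcompl | ⟨v, hvF1, w, hwF1, hvw, hnadj, hsimpv, hsimpw⟩
  · refine ⟨a, Reachable.refl a, ha, ?_⟩
    intro y z hyA hzA hay haz hyz
    exact hcompl y (hclose a y (Reachable.refl a) hyA hay) z
      (hclose a z (Reachable.refl a) hzA haz) hyz
  · have hkey : ∀ u, u ∈ F1 → u ∉ S → SimpIn G F1 u →
        ∃ v', (rest G (A \ S)).Reachable a v' ∧ SimpIn G A v' := by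
      intro u huF1 huS hsimp
      have hreach : (rest G (A \ S)).Reachable a u := by
        rcases ((hmemF1 u).1 huF1).2 with h | h
        · exact absurd h huS
        · exact h
      refine ⟨u, hreach, ((hmemF1 u).1 huF1).1, ?_⟩
      intro y z hyA hzA hy hz hyz
      exact hsimp.2 y z (hclose u y hreach hyA hy) (hclose u z hreach hzA hz) hy hz hyz
    by_cases hvS : v ∈ S
    · by_cases hwS : w ∈ S
      · exact absurd (hclique v hvS w hwS hvw) hnadj
      · exact hkey w hwF1 hwS hsimpw
    · exact hkey v hvF1 hvS hsimpv

theorem dirac {G : SimpleGraph (Fin n)} (hG : Chordal G) :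
    ∀ (N : ℕ) (A : Finset (Fin n)), A.card ≤ N →
      (∀ x ∈ A, ∀ y ∈ A, x ≠ y → G.Adj x y) ∨
      ∃ v ∈ A, ∃ w ∈ A, v ≠ w ∧ ¬ G.Adj v w ∧ SimpIn G A v ∧ SimpIn G A w := by
  intro N
  induction N with
  | zero =>
    intro A hA
    left
    intro x hx
    rw [Finset.card_eq_zero.1 (Nat.le_zero.1 hA)] at hx
    exact absurd hx (Finset.notMem_empty x)
  | succ N ih =>
    intro A hA
    by_cases hcompl : ∀ x ∈ A, ∀ y ∈ A, x ≠ y → G.Adj x y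
    · exact Or.inl hcompl
    right
    push_neg at hcompl
    obtain ⟨a, ha, b, hb, hab, hnadj⟩ := hcompl
    classical
    -- choose a minimum-cardinality (a,b)-separator S
    set Fam := (A \ {a,b}).powerset.filter
      (fun T => ¬ (rest G (A \ T)).Reachable a b) with hFam
    have hFamNe : A \ {a,b} ∈ Fam := by
      rw [hFam, Finset.mem_filter, Finset.mem_powerset]
      refine ⟨Finset.Subset.refl _, ?_⟩
      rintro ⟨w⟩
      cases w with
      | nil => exact hab rfl
      | cons hadj' w' =>
        have hyD := hadj'.2.1
        simp only [Finset.mem_sdiff, not_and, not_not] at hyD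
        have hyab := hyD.2 hyD.1
        rw [Finset.mem_insert, Finset.mem_singleton] at hyab
        rcases hyab with h' | h'
        · exact G.loopless.irrefl a (h' ▸ hadj'.2.2)
        · exact hnadj (h' ▸ hadj'.2.2)
    obtain ⟨S, hSmem, hSmin⟩ := Finset.exists_min_image Fam Finset.card ⟨_, hFamNe⟩
    rw [hFam, Finset.mem_filter, Finset.mem_powerset] at hSmem
    obtain ⟨hSsub, hsep⟩ := hSmem
    have hmin : ∀ T ⊆ A \ {a,b}, ¬ (rest G (A \ T)).Reachable a b → S.card ≤ T.card := by
      intro T hT hTsep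
      exact hSmin T (by rw [hFam, Finset.mem_filter, Finset.mem_powerset]; exact ⟨hT, hTsep⟩)
    have haS : a ∉ S := fun h => (Finset.mem_sdiff.1 (hSsub h)).2 (Finset.mem_insert_self _ _)
    have hbS : b ∉ S := fun h => (Finset.mem_sdiff.1 (hSsub h)).2 (by simp)
    have haAS : a ∈ A \ S := Finset.mem_sdiff.2 ⟨ha, haS⟩
    have hbAS : b ∈ A \ S := Finset.mem_sdiff.2 ⟨hb, hbS⟩
    have hSA : ∀ s ∈ S, s ∈ A := fun s hs => (Finset.mem_sdiff.1 (hSsub hs)).1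
    have hreachmemA : ∀ x, (rest G (A \ S)).Reachable a x → x ∈ A \ S := by
      rintro x ⟨w⟩; exact walk_end_mem w haAS
    have hreachmemB : ∀ x, (rest G (A \ S)).Reachable b x → x ∈ A \ S := by
      rintro x ⟨w⟩; exact walk_end_mem w hbAS
    have hABdisj : ∀ x, (rest G (A \ S)).Reachable a x → (rest G (A \ S)).Reachable b x → False :=
      fun x h1 h2 => hsep (h1.trans h2.symm)
    -- symmetric data for b
    have hSsub' : S ⊆ A \ {b,a} := by rwa [Finset.pair_comm b a]
    have hsep' : ¬ (rest G (A \ S)).Reachable b a := fun h => hsep h.symm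
    have hmin' : ∀ T ⊆ A \ {b,a}, ¬ (rest G (A \ T)).Reachable b a → S.card ≤ T.card := by
      intro T hT hTsep
      rw [Finset.pair_comm b a] at hT
      exact hmin T hT (fun h => hTsep h.symm)
    -- Claim: S is a clique
    have hclique : ∀ s ∈ S, ∀ t ∈ S, s ≠ t → G.Adj s t := by
      intro s hsS t htS hst
      by_contra hnadjst
      obtain ⟨xs, hxsR, hxsadj⟩ := sep_nbr ha hSsub hsep hmin hsS
      obtain ⟨xt, hxtR, hxtadj⟩ := sep_nbr ha hSsub hsep hmin htS
      obtain ⟨ys, hysR, hysadj⟩ := sep_nbr hb hSsub' hsep' hmin' hsS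
      obtain ⟨yt, hytR, hytadj⟩ := sep_nbr hb hSsub' hsep' hmin' htS
      have hsA : s ∈ A := hSA s hsS
      have htA : t ∈ A := hSA t htS
      -- existence of a walk from s to t with interior on the a-side
      have hPexists : ∀ (c : Fin n), (∃ w : (rest G A).Walk s t,
          ∀ z ∈ w.support, z = s ∨ z = t ∨ (rest G (A \ S)).Reachable c z) →
          ∃ (p : (rest G A).Walk s t), p.IsPath ∧
            (∀ z ∈ p.support, z = s ∨ z = t ∨ (rest G (A \ S)).Reachable c z) ∧
            ∀ w : (rest G A).Walk s t,
              (∀ z ∈ w.support, z = s ∨ z = t ∨ (rest G (A \ S)).Reachable c z) →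
              p.length ≤ w.length := by
        intro c hex
        have hex' : ∃ k, ∃ w : (rest G A).Walk s t,
            (∀ z ∈ w.support, z = s ∨ z = t ∨ (rest G (A \ S)).Reachable c z) ∧
            w.length = k := by
          obtain ⟨w, hw⟩ := hex; exact ⟨w.length, w, hw, rfl⟩
        obtain ⟨wmin, hwminP, hwminlen⟩ := Nat.find_spec hex'
        refine ⟨wmin.bypass, wmin.bypass_isPath, ?_, ?_⟩
        · intro z hz
          exact hwminP z (wmin.support_bypass_subset hz)
        · intro w hw
          have h1 : wmin.bypass.length ≤ wmin.length := wmin.length_bypass_le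
          have h2 : Nat.find hex' ≤ w.length := Nat.find_min' hex' ⟨w, hw, rfl⟩
          omega
      -- construct a walk from s to t with interior on one side
      have hbuild : ∀ (c x y : Fin n), c ∈ A \ S → (rest G (A \ S)).Reachable c x →
          (rest G (A \ S)).Reachable c y → G.Adj s x → G.Adj t y →
          ∃ w : (rest G A).Walk s t,
            ∀ z ∈ w.support, z = s ∨ z = t ∨ (rest G (A \ S)).Reachable c z := by
        intro c x y hcAS hx hy hsx hty
        obtain ⟨w0⟩ := hx.symm.trans hy
        have hxA : x ∈ A \ S := by obtain ⟨wx⟩ := hx; exact walk_end_mem wx hcAS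
        have hyA : y ∈ A \ S := by obtain ⟨wy⟩ := hy; exact walk_end_mem wy hcAS
        have hsupp : ∀ z ∈ w0.support, (rest G (A \ S)).Reachable c z := by
          intro z hz
          exact hx.trans (reachable_of_mem_support w0 hz)
        have hadj1 : (rest G A).Adj s x := ⟨hsA, (Finset.mem_sdiff.1 hxA).1, hsx⟩
        have hadj2 : (rest G A).Adj y t := ⟨(Finset.mem_sdiff.1 hyA).1, htA, hty.symm⟩
        refine ⟨Walk.cons hadj1 ((w0.mapLe (rest_mono Finset.sdiff_subset)).concat hadj2), ?_⟩
        intro z hz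
        rw [Walk.support_cons] at hz
        rcases List.mem_cons.1 hz with heq | hz
        · exact Or.inl heq
        · rw [Walk.support_concat, List.mem_append] at hz
          rcases hz with hz | hz
          · rw [support_mapLe] at hz
            exact Or.inr (Or.inr (hsupp z hz))
          · rw [List.mem_singleton] at hz
            exact Or.inr (Or.inl hz)
      obtain ⟨wA0, hwA0⟩ := hbuild a xs xt haAS hxsR hxtR hxsadj hxtadj
      obtain ⟨wB0, hwB0⟩ := hbuild b ys yt hbAS hysR hytR hysadj hytadj
      obtain ⟨pA, hpApath, hPA, hpAmin⟩ := hPexists a ⟨wA0, hwA0⟩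
      obtain ⟨pB, hpBpath, hPB, hpBmin⟩ := hPexists b ⟨wB0, hwB0⟩
      have hlenA : 2 ≤ pA.length := by
        by_contra hcon
        push_neg at hcon
        interval_cases hpa : pA.length
        · exact hst (Walk.eq_of_length_eq_zero hpa)
        · exact hnadjst (pA.adj_of_mem_edges (length_one_mem_edges pA hpa)).2.2
      have hlenB : 2 ≤ pB.length := by
        by_contra hcon
        push_neg at hcon
        interval_cases hpb : pB.length
        · exact hst (Walk.eq_of_length_eq_zero hpb)
        · exact hnadjst (pB.adj_of_mem_edges (length_one_mem_edges pB hpb)).2.2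
      set c := pA.append pB.reverse with hcdef
      have hcedges : c.edges = pA.edges ++ pB.edges.reverse := by
        rw [hcdef, Walk.edges_append, Walk.edges_reverse]
      have hsuppc : ∀ z ∈ c.support, z ∈ pA.support ∨ z ∈ pB.support := by
        intro z hz
        rcases (Walk.mem_support_append_iff _ _).1 hz with h | h
        · exact Or.inl h
        · right; rwa [Walk.support_reverse, List.mem_reverse] at h
      have honlyST : ∀ z, z ∈ pA.support → z ∈ pB.support → z = s ∨ z = t := by
        intro z h1 h2
        rcases hPA z h1 with h | h | h
        · exact Or.inl h
        · exact Or.inr h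
        · rcases hPB z h2 with h' | h' | h'
          · exact Or.inl h'
          · exact Or.inr h'
          · exact (hABdisj z h h').elim
      have hctrail : c.edges.Nodup := by
        rw [hcedges, List.nodup_append]
        refine ⟨hpApath.isTrail.edges_nodup, List.nodup_reverse.2 hpBpath.isTrail.edges_nodup, ?_⟩
        intro e he1 e' he2 hee
        subst hee
        rw [List.mem_reverse] at he2
        induction e using Sym2.ind with
        | _ x y =>
          have hxy : x ≠ y := (pA.adj_of_mem_edges he1).ne
          have hx1 := pA.fst_mem_support_of_mem_edges he1
          have hy1 := pA.snd_mem_support_of_mem_edges he1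
          have hx2 := pB.fst_mem_support_of_mem_edges he2
          have hy2 := pB.snd_mem_support_of_mem_edges he2
          have hadjxy : G.Adj x y := (pA.adj_of_mem_edges he1).2.2
          rcases honlyST x hx1 hx2 with rfl | rfl <;> rcases honlyST y hy1 hy2 with rfl | rfl
          · exact hxy rfl
          · exact hnadjst hadjxy
          · exact hnadjst hadjxy.symm
          · exact hxy rfl
      have hlenc : 4 ≤ c.length := by
        rw [hcdef, Walk.length_append, Walk.length_reverse]
        omega
      have hcnenil : c ≠ Walk.nil := by
        intro h
        rw [h] at hlenc
        simp at hlenc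
      have hpAsup : pA.support = s :: pA.support.tail := pA.support_eq_cons
      have hpBrevsup : pB.reverse.support = t :: pB.reverse.support.tail :=
        pB.reverse.support_eq_cons
      have hnodA : pA.support.tail.Nodup ∧ s ∉ pA.support.tail := by
        have hh := hpApath.support_nodup
        rw [hpAsup] at hh
        exact ⟨(List.nodup_cons.1 hh).2, (List.nodup_cons.1 hh).1⟩
      have hnodB : pB.reverse.support.tail.Nodup ∧ t ∉ pB.reverse.support.tail := by
        have hh := hpBpath.reverse.support_nodup
        rw [hpBrevsup] at hh
        exact ⟨(List.nodup_cons.1 hh).2, (List.nodup_cons.1 hh).1⟩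
      have htail : c.support.tail = pA.support.tail ++ pB.reverse.support.tail := by
        rw [hcdef, Walk.support_append, hpAsup, List.cons_append, List.tail_cons]
        rfl
      have hdisj2 : ∀ z ∈ pA.support.tail, z ∉ pB.reverse.support.tail := by
        intro z h1 h2
        have h1' : z ∈ pA.support := by rw [hpAsup]; exact List.mem_cons.2 (Or.inr h1)
        have h2' : z ∈ pB.support := by
          have hh : z ∈ pB.reverse.support := by
            rw [hpBrevsup]; exact List.mem_cons.2 (Or.inr h2)
          rwa [Walk.support_reverse, List.mem_reverse] at hh
        rcases honlyST z h1' h2' with rfl | rfl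
        · exact hnodA.2 h1
        · exact hnodB.2 h2
      have hcyc : c.IsCycle := by
        refine ⟨⟨⟨hctrail⟩, hcnenil⟩, ?_⟩
        rw [htail]
        exact List.nodup_append.2 ⟨hnodA.1, hnodB.1, fun a ha b hb hab => hdisj2 a ha (hab ▸ hb)⟩
      have hcyc' : (c.mapLe (rest_le (G := G) (A := A))).IsCycle := hcyc.mapLe _
      obtain ⟨u₁, u₂, hu₁, hu₂, huadj, hune⟩ := hG s (c.mapLe rest_le) hcyc'
        (by rw [length_mapLe]; exact hlenc)
      rw [support_mapLe] at hu₁ hu₂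
      rw [edges_mapLe] at hune
      have hmemA : ∀ z ∈ c.support, z ∈ A := by
        intro z hz
        rcases hsuppc z hz with h | h
        · rcases hPA z h with rfl | rfl | h'
          exacts [hsA, htA, (Finset.mem_sdiff.1 (hreachmemA z h')).1]
        · rcases hPB z h with rfl | rfl | h'
          exacts [hsA, htA, (Finset.mem_sdiff.1 (hreachmemB z h')).1]
      have hcaseA : ¬ (u₁ ∈ pA.support ∧ u₂ ∈ pA.support) := by
        rintro ⟨h1, h2⟩
        have hadjA : (rest G A).Adj u₁ u₂ := ⟨hmemA u₁ hu₁, hmemA u₂ hu₂, huadj⟩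
        have hnotedge : s(u₁,u₂) ∉ pA.edges := fun h =>
          hune (by rw [hcedges]; exact List.mem_append.2 (Or.inl h))
        obtain ⟨w', hw'sub, hw'len⟩ := shortcut pA h1 hadjA h2 hnotedge
        have hmin2 := hpAmin w' (fun z hz => hPA z (hw'sub z hz))
        omega
      have hcaseB : ¬ (u₁ ∈ pB.support ∧ u₂ ∈ pB.support) := by
        rintro ⟨h1, h2⟩
        have hadjA : (rest G A).Adj u₁ u₂ := ⟨hmemA u₁ hu₁, hmemA u₂ hu₂, huadj⟩
        have hnotedge : s(u₁,u₂) ∉ pB.edges := fun h =>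
          hune (by rw [hcedges]; exact List.mem_append.2 (Or.inr (List.mem_reverse.2 h)))
        obtain ⟨w', hw'sub, hw'len⟩ := shortcut pB h1 hadjA h2 hnotedge
        have hmin2 := hpBmin w' (fun z hz => hPB z (hw'sub z hz))
        omega
      rcases hsuppc u₁ hu₁ with h1A | h1B
      · rcases hsuppc u₂ hu₂ with h2A | h2B
        · exact hcaseA ⟨h1A, h2A⟩
        · by_cases h1B : u₁ ∈ pB.support
          · exact hcaseB ⟨h1B, h2B⟩
          by_cases h2A : u₂ ∈ pA.support
          · exact hcaseA ⟨h1A, h2A⟩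
          have hu₁r : (rest G (A \ S)).Reachable a u₁ := by
            rcases hPA u₁ h1A with rfl | rfl | h
            · exact absurd pB.start_mem_support h1B
            · exact absurd pB.end_mem_support h1B
            · exact h
          have hu₂r : (rest G (A \ S)).Reachable b u₂ := by
            rcases hPB u₂ h2B with rfl | rfl | h
            · exact absurd pA.start_mem_support h2A
            · exact absurd pA.end_mem_support h2A
            · exact h
          have h1AS := hreachmemA u₁ hu₁r
          have h2AS := hreachmemB u₂ hu₂r
          exact hABdisj u₂ (hu₁r.trans (SimpleGraph.Adj.reachable ⟨h1AS, h2AS, huadj⟩)) hu₂r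
      · rcases hsuppc u₂ hu₂ with h2A | h2B
        · by_cases h2B : u₂ ∈ pB.support
          · exact hcaseB ⟨h1B, h2B⟩
          by_cases h1A : u₁ ∈ pA.support
          · exact hcaseA ⟨h1A, h2A⟩
          have hu₁r : (rest G (A \ S)).Reachable b u₁ := by
            rcases hPB u₁ h1B with rfl | rfl | h
            · exact absurd pA.start_mem_support h1A
            · exact absurd pA.end_mem_support h1A
            · exact h
          have hu₂r : (rest G (A \ S)).Reachable a u₂ := by
            rcases hPA u₂ h2A with rfl | rfl | h
            · exact absurd pB.start_mem_support h2B
            · exact absurd pB.end_mem_support h2B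
            · exact h
          have h1AS := hreachmemB u₁ hu₁r
          have h2AS := hreachmemA u₂ hu₂r
          exact hABdisj u₁ (hu₂r.trans (SimpleGraph.Adj.reachable ⟨h2AS, h1AS, huadj.symm⟩)) hu₁r
        · exact hcaseB ⟨h1B, h2B⟩
    -- apply `side` on both sides
    have IH' : ∀ B : Finset (Fin n), B.card < A.card →
        (∀ x ∈ B, ∀ y ∈ B, x ≠ y → G.Adj x y) ∨
        ∃ v ∈ B, ∃ w ∈ B, v ≠ w ∧ ¬ G.Adj v w ∧ SimpIn G B v ∧ SimpIn G B w := by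
      intro B hB
      exact ih B (by omega)
    obtain ⟨v, hvreach, hvsimp⟩ := side ha hb hSsub hsep hclique IH'
    obtain ⟨w, hwreach, hwsimp⟩ := side hb ha hSsub' hsep' hclique IH'
    have hvw : v ≠ w := by
      intro h
      exact hABdisj v hvreach (h ▸ hwreach)
    refine ⟨v, hvsimp.1, w, hwsimp.1, hvw, ?_, hvsimp, hwsimp⟩
    intro hadj
    have hv' := hreachmemA v hvreach
    have hw' := hreachmemB w hwreach
    exact hABdisj w (hvreach.trans (SimpleGraph.Adj.reachable ⟨hv', hw', hadj⟩)) hwreach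

end D5
namespace D5
open Finset

variable {n : ℕ}

open scoped Classical in
/-- pick a non-isolated simplicial vertex, if one exists -/
noncomputable def pick (hn : 2 ≤ n) (E : Finset (Finset (Fin n))) : Fin n :=
  if h : ∃ v : Fin n, (∃ u₀ : Fin n, u₀ ≠ v ∧ ({v,u₀} : Finset (Fin n)) ∈ E) ∧
      ∀ y z : Fin n, y ≠ v → z ≠ v → y ≠ z → ({v,y} : Finset (Fin n)) ∈ E →
        ({v,z} : Finset (Fin n)) ∈ E → ({y,z} : Finset (Fin n)) ∈ E
  then h.choose else ⟨0, by omega⟩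

lemma pick_spec (hn : 2 ≤ n) {E : Finset (Finset (Fin n))}
    (h : ∃ v : Fin n, (∃ u₀ : Fin n, u₀ ≠ v ∧ ({v,u₀} : Finset (Fin n)) ∈ E) ∧
      ∀ y z : Fin n, y ≠ v → z ≠ v → y ≠ z → ({v,y} : Finset (Fin n)) ∈ E →
        ({v,z} : Finset (Fin n)) ∈ E → ({y,z} : Finset (Fin n)) ∈ E) :
    (∃ u₀ : Fin n, u₀ ≠ pick hn E ∧ ({pick hn E, u₀} : Finset (Fin n)) ∈ E) ∧
      ∀ y z : Fin n, y ≠ pick hn E → z ≠ pick hn E → y ≠ z →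
        ({pick hn E, y} : Finset (Fin n)) ∈ E →
        ({pick hn E, z} : Finset (Fin n)) ∈ E → ({y,z} : Finset (Fin n)) ∈ E := by
  rw [pick, dif_pos h]
  exact h.choose_spec

lemma exists_simplicial {E : Finset (Finset (Fin n))} (hG : Chordal (graphOf E))
    (hE : ∀ F ∈ E, F.card = 2) (hne : E.Nonempty) :
    ∃ v : Fin n, (∃ u₀ : Fin n, u₀ ≠ v ∧ ({v,u₀} : Finset (Fin n)) ∈ E) ∧
      ∀ y z : Fin n, y ≠ v → z ≠ v → y ≠ z → ({v,y} : Finset (Fin n)) ∈ E →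
        ({v,z} : Finset (Fin n)) ∈ E → ({y,z} : Finset (Fin n)) ∈ E := by
  classical
  set G := graphOf E with hGdef
  set A := Finset.univ.filter (fun x : Fin n => ∃ y, G.Adj x y) with hA
  obtain ⟨e, heE⟩ := hne
  obtain ⟨x0, y0, hxy0, rfl⟩ := Finset.card_eq_two.1 (hE e heE)
  have hadj0 : G.Adj x0 y0 := ⟨hxy0, heE⟩
  have hmemA : ∀ x y : Fin n, G.Adj x y → x ∈ A := by
    intro x y h
    rw [hA, Finset.mem_filter]
    exact ⟨Finset.mem_univ x, y, h⟩
  have hex : ∃ v, v ∈ A ∧ SimpIn G A v := by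
    rcases dirac hG A.card A (le_refl _) with hcompl | ⟨v, hvA, -, -, -, -, hsimp, -⟩
    · refine ⟨x0, hmemA _ _ hadj0, hmemA _ _ hadj0, ?_⟩
      intro y z hy hz _ _ hyz
      exact hcompl y hy z hz hyz
    · exact ⟨v, hvA, hsimp⟩
  obtain ⟨v, hvA, hsimp⟩ := hex
  have hvnbr : ∃ u, G.Adj v u := by
    rw [hA, Finset.mem_filter] at hvA
    exact hvA.2
  obtain ⟨u₀, hu₀⟩ := hvnbr
  refine ⟨v, ⟨u₀, fun h => hu₀.1 h.symm, hu₀.2⟩, ?_⟩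
  intro y z hyv hzv hyz hvy hvz
  have hadjy : G.Adj v y := ⟨fun h => hyv h.symm, hvy⟩
  have hadjz : G.Adj v z := ⟨fun h => hzv h.symm, hvz⟩
  exact (hsimp.2 y z (hmemA y v hadjy.symm) (hmemA z v hadjz.symm) hadjy hadjz hyz).2

noncomputable def elimSeq (hn : 2 ≤ n) (S2 : Finset (Finset (Fin n))) :
    ℕ → Finset (Finset (Fin n))
  | 0 => S2
  | j+1 => elimSeq hn S2 j \ star (elimSeq hn S2 j) (pick hn (elimSeq hn S2 j))

lemma elimSeq_succ (hn : 2 ≤ n) (S2 : Finset (Finset (Fin n))) (j : ℕ) :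
    elimSeq hn S2 (j+1) =
      elimSeq hn S2 j \ star (elimSeq hn S2 j) (pick hn (elimSeq hn S2 j)) := rfl

theorem forward (𝔽 : Type*) [Field 𝔽] (hn : 2 ≤ n) (S2 : Finset (Finset (Fin n)))
    (hS2 : ∀ F ∈ S2, F.card = 2) (hch : Chordal (graphOf S2)) : DPerfect 𝔽 n 2 S2 := by
  classical
  set r := simRank 𝔽 n 2 S2 with hrdef
  have hsub : ∀ j, elimSeq hn S2 j ⊆ S2 := by
    intro j
    induction j with
    | zero => exact Finset.Subset.refl _
    | succ j ih => rw [elimSeq_succ]; exact Finset.sdiff_subset.trans ih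
  have hcards : ∀ j, ∀ F ∈ elimSeq hn S2 j, F.card = 2 := fun j F hF => hS2 F (hsub j hF)
  have hchj : ∀ j, Chordal (graphOf (elimSeq hn S2 j)) := by
    intro j
    induction j with
    | zero => exact hch
    | succ j ih => rw [elimSeq_succ]; exact chordal_star_del ih _
  have hgood : ∀ j, (elimSeq hn S2 j).Nonempty →
      (∃ u₀ : Fin n, u₀ ≠ pick hn (elimSeq hn S2 j) ∧
        ({pick hn (elimSeq hn S2 j), u₀} : Finset (Fin n)) ∈ elimSeq hn S2 j) ∧
      ∀ y z : Fin n, y ≠ pick hn (elimSeq hn S2 j) → z ≠ pick hn (elimSeq hn S2 j) → y ≠ z →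
        ({pick hn (elimSeq hn S2 j), y} : Finset (Fin n)) ∈ elimSeq hn S2 j →
        ({pick hn (elimSeq hn S2 j), z} : Finset (Fin n)) ∈ elimSeq hn S2 j →
        ({y,z} : Finset (Fin n)) ∈ elimSeq hn S2 j :=
    fun j hne => pick_spec hn (exists_simplicial (hchj j) (hcards j) hne)
  -- the clique condition in the unrestricted form
  have hclq' : ∀ j, (elimSeq hn S2 j).Nonempty → ∀ y z : Fin n, y ≠ z →
      ({pick hn (elimSeq hn S2 j), y} : Finset (Fin n)) ∈ elimSeq hn S2 j →
      ({pick hn (elimSeq hn S2 j), z} : Finset (Fin n)) ∈ elimSeq hn S2 j →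
      ({y,z} : Finset (Fin n)) ∈ elimSeq hn S2 j := by
    intro j hne y z hyz h1 h2
    have hy : y ≠ pick hn (elimSeq hn S2 j) := by
      intro h
      have := hcards j _ h1
      rw [← h] at this
      simp at this
    have hz : z ≠ pick hn (elimSeq hn S2 j) := by
      intro h
      have := hcards j _ h2
      rw [← h] at this
      simp at this
    exact (hgood j hne).2 y z hy hz hyz h1 h2
  have hrank : ∀ j ≤ r, simRank 𝔽 n 2 (elimSeq hn S2 j) = r - j := by
    intro j
    induction j with
    | zero => intro _; rw [hrdef]; rfl
    | succ j ih =>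
      intro hj
      have hrj := ih (by omega)
      have hpos : 0 < simRank 𝔽 n 2 (elimSeq hn S2 j) := by omega
      have hne : (elimSeq hn S2 j).Nonempty := by
        by_contra h
        rw [Finset.not_nonempty_iff_eq_empty] at h
        rw [h, simRank_empty] at hpos
        omega
      obtain ⟨⟨u₀, hu₀ne, hu₀mem⟩, -⟩ := hgood j hne
      have hlt := simRank_sdiff_star_lt (𝔽 := 𝔽) (v := pick hn (elimSeq hn S2 j)) (hcards j)
        hu₀mem (Finset.mem_insert_self _ _)
      have hge := simRank_le_sdiff_star_add_one (𝔽 := 𝔽) (hcards j) (hclq' j hne)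
        ⟨{pick hn (elimSeq hn S2 j), u₀}, mem_star.2 ⟨hu₀mem, Finset.mem_insert_self _ _⟩⟩
      rw [elimSeq_succ]
      omega
  -- the sequence of simplicial vertices
  refine ⟨fun j => ({pick hn (elimSeq hn S2 j)} : Finset (Fin n)), ?_⟩
  have hdel : ∀ j, delSeq 𝔽 S2 (fun j => ({pick hn (elimSeq hn S2 j)} : Finset (Fin n))) j =
      elimSeq hn S2 j := by
    intro j
    induction j with
    | zero => rfl
    | succ j ih =>
      show delSeq 𝔽 S2 _ j \ suppδ 𝔽 (delSeq 𝔽 S2 _ j) _ = _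
      rw [ih, elimSeq_succ, suppδ_eq_star (hcards j)]
  have hstep : ∀ j < r, (elimSeq hn S2 j).Nonempty := by
    intro j hj
    have := hrank j (le_of_lt hj)
    by_contra h
    rw [Finset.not_nonempty_iff_eq_empty] at h
    rw [h, simRank_empty] at this
    omega
  refine ⟨⟨rfl, fun j hj => rfl, fun j hj => ?_⟩, fun j hj => ?_⟩
  · -- cocircuit condition
    rw [Cstar_eq_suppδ_delSeq, hdel j, suppδ_eq_star (hcards j)]
    have hne := hstep j hj
    obtain ⟨⟨u₀, hu₀ne, hu₀mem⟩, -⟩ := hgood j hne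
    refine ⟨star_subset, ?_, ?_⟩
    · exact simRank_sdiff_star_lt (𝔽 := 𝔽) (hcards j) hu₀mem (Finset.mem_insert_self _ _)
    · intro C' hC'
      exact simRank_sdiff_proper_eq (hcards j) (hclq' j hne) hC'
  · -- simpliciality
    rw [hdel j]
    have hne := hstep j hj
    obtain ⟨⟨u₀, hu₀ne, hu₀mem⟩, -⟩ := hgood j hne
    exact simplicialFace_of_graph hu₀ne hu₀mem (fun y z hy hz hyz h1 h2 => hclq' j hne y z hyz h1 h2)

theorem backward (𝔽 : Type*) [Field 𝔽] (hn : 2 ≤ n) (S2 : Finset (Finset (Fin n)))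
    (hS2 : ∀ F ∈ S2, F.card = 2) (hdp : DPerfect 𝔽 n 2 S2) : Chordal (graphOf S2) := by
  classical
  obtain ⟨V, ⟨-, hcards1, hcocirc⟩, hsimpl⟩ := hdp
  set r := simRank 𝔽 n 2 S2 with hrdef
  intro v₀ c hc hlen
  have hranks : ∀ j, j ≤ r → simRank 𝔽 n 2 (delSeq 𝔽 S2 V j) + j ≤ r := by
    intro j
    induction j with
    | zero =>
      intro _
      show simRank 𝔽 n 2 S2 + 0 ≤ r
      omega
    | succ j ih =>
      intro hj
      have h1 := (hcocirc j (by omega)).2.1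
      rw [← delSeq_succ_eq_sdiff_Cstar] at h1
      have h2 := ih (by omega)
      omega
  have hempty : delSeq 𝔽 S2 V r = ∅ := by
    by_contra h
    obtain ⟨F, hF⟩ := Finset.nonempty_iff_ne_empty.2 h
    have hF2 : F.card = 2 := hS2 F (delSeq_subset _ _ _ hF)
    have hpos := simRank_pos (𝔽 := 𝔽) hF hF2
    have := hranks r (le_refl r)
    omega
  have hedgeS2 : ∀ x y : Fin n, s(x,y) ∈ c.edges → x ≠ y ∧ ({x,y} : Finset (Fin n)) ∈ S2 := by
    intro x y h
    have hadj := c.adj_of_mem_edges h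
    exact ⟨hadj.1, hadj.2⟩
  set J := (Finset.range r).filter (fun i => ∃ x y : Fin n, s(x,y) ∈ c.edges ∧
    ({x,y} : Finset (Fin n)) ∈ suppδ 𝔽 S2 (V i)) with hJ
  have hJne : J.Nonempty := by
    have hlenpos : 0 < c.edges.length := by rw [SimpleGraph.Walk.length_edges]; omega
    obtain ⟨e, he⟩ := List.exists_mem_of_length_pos hlenpos
    induction e using Sym2.ind with
    | _ x y =>
      have hxyS2 := (hedgeS2 x y he).2
      have hnotin : ({x,y} : Finset (Fin n)) ∉ delSeq 𝔽 S2 V r := by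
        rw [hempty]; exact Finset.notMem_empty _
      rw [delSeq_eq] at hnotin
      have hbi : ({x,y} : Finset (Fin n)) ∈
          (Finset.range r).biUnion (fun i => suppδ 𝔽 S2 (V i)) := by
        by_contra hno
        exact hnotin (Finset.mem_sdiff.2 ⟨hxyS2, hno⟩)
      obtain ⟨i, hi, hmem⟩ := Finset.mem_biUnion.1 hbi
      exact ⟨i, by rw [hJ]; exact Finset.mem_filter.2 ⟨hi, x, y, he, hmem⟩⟩
  set j := J.min' hJne with hjdef
  have hjJ : j ∈ J := J.min'_mem hJne
  rw [hJ, Finset.mem_filter] at hjJ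
  obtain ⟨hjr, x, y, hxye, hxys⟩ := hjJ
  rw [Finset.mem_range] at hjr
  have hfree : ∀ x' y' : Fin n, s(x',y') ∈ c.edges →
      ({x',y'} : Finset (Fin n)) ∈ delSeq 𝔽 S2 V j := by
    intro x' y' he
    rw [delSeq_eq, Finset.mem_sdiff]
    refine ⟨(hedgeS2 x' y' he).2, fun hmem => ?_⟩
    obtain ⟨i, hi, hm⟩ := Finset.mem_biUnion.1 hmem
    rw [Finset.mem_range] at hi
    have hiJ : i ∈ J := by
      rw [hJ]
      exact Finset.mem_filter.2 ⟨Finset.mem_range.2 (by omega), x', y', he, hm⟩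
    have hle := J.min'_le i hiJ
    rw [← hjdef] at hle
    omega
  obtain ⟨v, hv⟩ := Finset.card_eq_one.1 (hcards1 j hjr)
  have hcards_del : ∀ F ∈ delSeq 𝔽 S2 V j, F.card = 2 :=
    fun F hF => hS2 F (delSeq_subset _ _ _ hF)
  have hxy_in : ({x,y} : Finset (Fin n)) ∈ suppδ 𝔽 (delSeq 𝔽 S2 V j) (V j) :=
    (mem_suppδ_of_subset (delSeq_subset _ _ _)).2 ⟨hfree x y hxye, hxys⟩
  rw [hv, suppδ_eq_star hcards_del] at hxy_in
  have hvmem : v ∈ ({x,y} : Finset (Fin n)) := (mem_star.1 hxy_in).2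
  have hvsupp : v ∈ c.support := by
    rw [Finset.mem_insert, Finset.mem_singleton] at hvmem
    rcases hvmem with rfl | rfl
    · exact c.fst_mem_support_of_mem_edges hxye
    · exact c.snd_mem_support_of_mem_edges hxye
  obtain ⟨p, q, hpq, hvp, hvq, hpqe⟩ := cycle_neighbors hc hlen hvsupp
  have hvpmem : ({v,p} : Finset (Fin n)) ∈ delSeq 𝔽 S2 V j := hfree v p hvp
  have hvqmem : ({v,q} : Finset (Fin n)) ∈ delSeq 𝔽 S2 V j := hfree v q hvq
  have hsimp := hsimpl j hjr
  rw [hv] at hsimp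
  obtain ⟨-, hclq⟩ := simplicialFace_to_graph hcards_del hsimp
  have hpqmem : ({p,q} : Finset (Fin n)) ∈ delSeq 𝔽 S2 V j := hclq p q hpq hvpmem hvqmem
  exact ⟨p, q, c.snd_mem_support_of_mem_edges hvp, c.snd_mem_support_of_mem_edges hvq,
    ⟨hpq, delSeq_subset _ _ _ hpqmem⟩, hpqe⟩

end D5

theorem stmt5 (𝔽 : Type*) [Field 𝔽] (n : ℕ) (hn : 2 ≤ n)
    (S2 : Finset (Finset (Fin n))) (hS2 : ∀ F ∈ S2, F.card = 2) :
    Chordal (graphOf S2) ↔ DPerfect 𝔽 n 2 S2 :=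
  ⟨D5.forward 𝔽 hn S2 hS2, D5.backward 𝔽 hn S2 hS2⟩
end
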